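/- arXiv:2407.02717 — 6 statements merged into one kernel-verified Lean document; each statement's English description precedes it below -/
import Mathlib

section
/- For every s > 1 and every x ∈ ℝ, the inverse Fourier transform of the symbol (1+ξ²)^{-s/2} admits the heat-kernel representation: (1/(2π)) ∫_ℝ (1+ξ²)^{-s/2} e^{i x ξ} dξ = (1/(2√π · Γ(s/2))) ∫₀^∞ exp(−t − x²/(4t)) · t^{(s−3)/2} dt, where both integrals converge absolutely. -/
open Real MeasureTheory Set Filter

/-- The Bessel kernel `K_s`. -/
noncomputable def besselKernel (s : ℝ) (x : ℝ) : ℝ :=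
  (1 / (2 * Real.sqrt Real.pi * Real.Gamma (s / 2))) *
    ∫ t in Set.Ioi (0 : ℝ), Real.exp (-t - x ^ 2 / (4 * t)) * t ^ ((s - 3) / 2)

/-- Convolution with the Bessel kernel. -/
noncomputable def convBessel (s : ℝ) (f : ℝ → ℝ) (x : ℝ) : ℝ :=
  ∫ y : ℝ, besselKernel s (x - y) * f y

section aux

open Complex

private lemma aux_gamma (s : ℝ) (hs : 1 < s) (ξ : ℝ) :
    ∫ t in Ioi (0:ℝ), Real.exp (-((1 + ξ ^ 2) * t)) * t ^ (s / 2 - 1)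
      = Real.Gamma (s/2) * (1 + ξ ^ 2) ^ (-(s / 2)) := by
  have hr : (0:ℝ) < 1 + ξ ^ 2 := by positivity
  have : ∫ t in Ioi (0:ℝ), Real.exp (-((1 + ξ ^ 2) * t)) * t ^ (s / 2 - 1)
      = ∫ t in Ioi (0:ℝ), t ^ (s / 2 - 1) * Real.exp (-((1 + ξ ^ 2) * t)) := by
    congr 1; ext t; ring
  rw [this, Real.integral_rpow_mul_exp_neg_mul_Ioi (by linarith) hr]
  rw [one_div, Real.inv_rpow hr.le, ← Real.rpow_neg hr.le]
  ring

private lemma aux_inner_t (s : ℝ) (hs : 1 < s) (x : ℝ) (ξ : ℝ) :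
    ∫ t in Ioi (0:ℝ), Complex.exp (Complex.I * x * ξ) *
      ((Real.exp (-((1 + ξ ^ 2) * t)) * t ^ (s / 2 - 1) : ℝ) : ℂ)
    = Complex.exp (Complex.I * x * ξ) *
        ((Real.Gamma (s/2) * (1 + ξ ^ 2) ^ (-(s / 2)) : ℝ) : ℂ) := by
  rw [integral_const_mul]
  congr 1
  exact (integral_ofReal (𝕜 := ℂ)).trans (congrArg _ (aux_gamma s hs ξ))

private lemma aux_inner_xi (s : ℝ) (hs : 1 < s) (x t : ℝ) (ht : 0 < t) :
    ∫ ξ : ℝ, Complex.exp (Complex.I * x * ξ) *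
      ((Real.exp (-((1 + ξ ^ 2) * t)) * t ^ (s / 2 - 1) : ℝ) : ℂ)
    = ((Real.sqrt Real.pi * (Real.exp (-t - x ^ 2 / (4 * t)) * t ^ ((s - 3) / 2)) : ℝ) : ℂ) := by
  have h1 : ∀ ξ : ℝ, Complex.exp (Complex.I * x * ξ) *
      ((Real.exp (-((1 + ξ ^ 2) * t)) * t ^ (s / 2 - 1) : ℝ) : ℂ)
      = ((Real.exp (-t) * t ^ (s / 2 - 1) : ℝ) : ℂ) *
        (Complex.exp (Complex.I * x * ξ) * Complex.exp (-(t:ℂ) * ξ ^ 2)) := by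
    intro ξ
    have : (-((1 + ξ ^ 2) * t)) = (-t) + (-(t * ξ^2)) := by ring
    rw [this, Real.exp_add]
    push_cast [Complex.ofReal_exp]
    ring
  simp_rw [h1]
  rw [integral_const_mul, fourierIntegral_gaussian (by simpa using ht) (x : ℂ)]
  have hπt : (0:ℝ) ≤ Real.pi / t := by positivity
  have e1 : ((Real.pi : ℂ) / t) ^ (1/2 : ℂ) = (((Real.pi / t) ^ (1/2 : ℝ) : ℝ) : ℂ) := by
    rw [Complex.ofReal_cpow hπt]; push_cast; ring_nf
  have e2 : Complex.exp (-(x:ℂ) ^ 2 / (4 * t)) = ((Real.exp (-(x^2/(4*t))) : ℝ) : ℂ) := by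
    rw [Complex.ofReal_exp]; push_cast; ring_nf
  rw [e1, e2]
  norm_cast
  have h2 : (Real.pi / t) ^ (1/2 : ℝ) = Real.sqrt Real.pi * t ^ (-(1/2) : ℝ) := by
    rw [Real.div_rpow Real.pi_pos.le ht.le, Real.sqrt_eq_rpow, Real.rpow_neg ht.le,
      div_eq_mul_inv]
  have h3 : t ^ ((s-3)/2) = t ^ (s/2-1) * t ^ (-(1/2) : ℝ) := by
    rw [← Real.rpow_add ht]; congr 1; ring
  rw [h2, h3, show -t - x^2/(4*t) = -t + -(x^2/(4*t)) from by ring, Real.exp_add]; ring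

end aux

/-- heat-kernel representation of the inverse Fourier transform of
`(1+ξ²)^{-s/2}` for `s > 1`, with absolute convergence of both integrals. -/
theorem besselKernel_heat_representation (s : ℝ) (hs : 1 < s) (x : ℝ) :
    Integrable (fun ξ : ℝ => ((1 + ξ ^ 2) ^ (-(s / 2)) : ℝ)) ∧
    Integrable
      (fun ξ : ℝ => (((1 + ξ ^ 2) ^ (-(s / 2)) : ℝ) : ℂ) * Complex.exp (Complex.I * x * ξ)) ∧
    IntegrableOn (fun t : ℝ => Real.exp (-t - x ^ 2 / (4 * t)) * t ^ ((s - 3) / 2))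
      (Set.Ioi (0 : ℝ)) ∧
    ((1 / (2 * Real.pi) : ℝ) : ℂ) *
        ∫ ξ : ℝ, (((1 + ξ ^ 2) ^ (-(s / 2)) : ℝ) : ℂ) * Complex.exp (Complex.I * x * ξ) =
      (((1 / (2 * Real.sqrt Real.pi * Real.Gamma (s / 2))) *
        ∫ t in Set.Ioi (0 : ℝ), Real.exp (-t - x ^ 2 / (4 * t)) * t ^ ((s - 3) / 2) : ℝ) : ℂ) := by
  have h1 : Integrable (fun ξ : ℝ => ((1 + ξ ^ 2) ^ (-(s / 2)) : ℝ)) := by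
    have := integrable_rpow_neg_one_add_norm_sq (E := ℝ) (μ := volume) (r := s) (by simpa using hs)
    refine this.congr (Eventually.of_forall fun ξ => ?_)
    simp [Real.norm_eq_abs, sq_abs, neg_div]
  have hnorm1 : ∀ ξ : ℝ, ‖(((1 + ξ ^ 2) ^ (-(s / 2)) : ℝ) : ℂ) * Complex.exp (Complex.I * x * ξ)‖
      = ((1 + ξ ^ 2) ^ (-(s / 2)) : ℝ) := by
    intro ξ
    have hre : (Complex.I * x * ξ).re = 0 := by simp
    rw [norm_mul, Complex.norm_exp, hre, Real.exp_zero,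
      mul_one, Complex.norm_real, Real.norm_eq_abs,
      abs_of_nonneg (Real.rpow_nonneg (by positivity) _)]
  have h2 : Integrable
      (fun ξ : ℝ => (((1 + ξ ^ 2) ^ (-(s / 2)) : ℝ) : ℂ) * Complex.exp (Complex.I * x * ξ)) := by
    refine h1.mono' (Measurable.aestronglyMeasurable (by fun_prop)) ?_
    exact Eventually.of_forall fun ξ => le_of_eq (hnorm1 ξ)
  have h3 : IntegrableOn (fun t : ℝ => Real.exp (-t - x ^ 2 / (4 * t)) * t ^ ((s - 3) / 2))
      (Set.Ioi (0 : ℝ)) := by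
    have h := Real.GammaIntegral_convergent (s := (s - 1) / 2) (by linarith)
    have h' : IntegrableOn (fun t : ℝ => Real.exp (-t) * t ^ ((s - 3) / 2)) (Ioi 0) := by
      refine h.congr_fun (fun t ht => ?_) measurableSet_Ioi
      ring_nf
    refine h'.mono' (Measurable.aestronglyMeasurable (by fun_prop)) ?_
    filter_upwards [ae_restrict_mem measurableSet_Ioi] with t ht
    have ht' : (0:ℝ) < t := ht
    have hle : Real.exp (-t - x ^ 2 / (4 * t)) ≤ Real.exp (-t) := by
      apply Real.exp_le_exp.2
      nlinarith [div_nonneg (sq_nonneg x) (by linarith : (0:ℝ) ≤ 4*t)]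
    rw [Real.norm_eq_abs, abs_mul, abs_of_pos (Real.exp_pos _),
      abs_of_pos (Real.rpow_pos_of_pos ht' _)]
    exact mul_le_mul_of_nonneg_right hle (Real.rpow_pos_of_pos ht' _).le
  refine ⟨h1, h2, h3, ?_⟩
  -- main identity
  set g : ℝ → ℝ → ℂ := fun ξ t => Complex.exp (Complex.I * x * ξ) *
      ((Real.exp (-((1 + ξ ^ 2) * t)) * t ^ (s / 2 - 1) : ℝ) : ℂ) with hg
  have hgnorm : ∀ ξ t : ℝ, 0 < t → ‖g ξ t‖ = Real.exp (-((1 + ξ ^ 2) * t)) * t ^ (s / 2 - 1) := by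
    intro ξ t ht
    have hre : (Complex.I * x * ξ).re = 0 := by simp
    rw [hg, norm_mul, Complex.norm_exp, hre, Real.exp_zero,
      one_mul, Complex.norm_real, Real.norm_eq_abs, abs_of_nonneg]
    positivity
  have hslice : ∀ ξ : ℝ, Integrable (fun t => g ξ t) (volume.restrict (Ioi 0)) := by
    intro ξ
    have hG := Real.GammaIntegral_convergent (s := s/2) (by linarith)
    refine hG.mono' (Measurable.aestronglyMeasurable (by fun_prop)) ?_
    filter_upwards [ae_restrict_mem measurableSet_Ioi] with t ht
    have ht' : (0:ℝ) < t := ht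
    rw [hgnorm ξ t ht']
    have : Real.exp (-((1 + ξ ^ 2) * t)) ≤ Real.exp (-t) := by
      apply Real.exp_le_exp.2; nlinarith [sq_nonneg ξ]
    exact mul_le_mul_of_nonneg_right this (Real.rpow_pos_of_pos ht' _).le
  have hnormint : ∀ ξ : ℝ, (∫ t in Ioi (0:ℝ), ‖g ξ t‖)
      = Real.Gamma (s/2) * (1 + ξ ^ 2) ^ (-(s / 2)) := by
    intro ξ
    rw [setIntegral_congr_fun measurableSet_Ioi (fun t ht => hgnorm ξ t ht)]
    exact aux_gamma s hs ξ
  have hprod : Integrable (Function.uncurry g) (volume.prod (volume.restrict (Ioi 0))) := by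
    rw [integrable_prod_iff (Measurable.aestronglyMeasurable (by fun_prop))]
    refine ⟨Eventually.of_forall hslice, ?_⟩
    refine ((h1.const_mul (Real.Gamma (s/2))).congr ?_)
    exact Eventually.of_forall fun ξ => (hnormint ξ).symm
  have hswap : (∫ ξ : ℝ, ∫ t in Ioi (0:ℝ), g ξ t)
      = ∫ t in Ioi (0:ℝ), ∫ ξ : ℝ, g ξ t := integral_integral_swap hprod
  -- compute LHS of hswap
  have hL : (∫ ξ : ℝ, ∫ t in Ioi (0:ℝ), g ξ t)
      = (Real.Gamma (s/2) : ℂ) *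
        ∫ ξ : ℝ, (((1 + ξ ^ 2) ^ (-(s / 2)) : ℝ) : ℂ) * Complex.exp (Complex.I * x * ξ) := by
    rw [← integral_const_mul]
    congr 1
    ext ξ
    rw [hg]
    rw [aux_inner_t s hs x ξ]
    push_cast
    ring
  -- compute RHS of hswap
  have hR : (∫ t in Ioi (0:ℝ), ∫ ξ : ℝ, g ξ t)
      = (Real.sqrt Real.pi : ℂ) *
        ((∫ t in Ioi (0:ℝ), Real.exp (-t - x ^ 2 / (4 * t)) * t ^ ((s - 3) / 2) : ℝ) : ℂ) := by
    rw [setIntegral_congr_fun measurableSet_Ioi (fun t ht => aux_inner_xi s hs x t ht)]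
    have h5 : (∫ t in Ioi (0:ℝ), Real.sqrt Real.pi * (Real.exp (-t - x ^ 2 / (4 * t)) * t ^ ((s - 3) / 2)))
        = Real.sqrt Real.pi * ∫ t in Ioi (0:ℝ), Real.exp (-t - x ^ 2 / (4 * t)) * t ^ ((s - 3) / 2) :=
      MeasureTheory.integral_const_mul _ _
    refine (integral_ofReal (𝕜 := ℂ)
      (f := fun t => Real.sqrt Real.pi * (Real.exp (-t - x ^ 2 / (4 * t)) * t ^ ((s - 3) / 2)))
      (μ := volume.restrict (Ioi 0))).trans ?_
    rw [h5]
    norm_cast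
  have E : (Real.Gamma (s/2) : ℂ) *
        ∫ ξ : ℝ, (((1 + ξ ^ 2) ^ (-(s / 2)) : ℝ) : ℂ) * Complex.exp (Complex.I * x * ξ)
      = (Real.sqrt Real.pi : ℂ) *
        ((∫ t in Ioi (0:ℝ), Real.exp (-t - x ^ 2 / (4 * t)) * t ^ ((s - 3) / 2) : ℝ) : ℂ) := by
    rw [← hL, hswap, hR]
  have hΓpos : 0 < Real.Gamma (s/2) := Real.Gamma_pos_of_pos (by linarith)
  have hΓ : (Real.Gamma (s/2) : ℂ) ≠ 0 := by exact_mod_cast hΓpos.ne'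
  have hsp : (0:ℝ) < Real.sqrt Real.pi := Real.sqrt_pos.2 Real.pi_pos
  have hsqne : (Real.sqrt Real.pi : ℂ) ≠ 0 := by exact_mod_cast hsp.ne'
  have hπ : (Real.pi : ℂ) ≠ 0 := by exact_mod_cast Real.pi_pos.ne'
  have hss : (Real.sqrt Real.pi : ℂ) * (Real.sqrt Real.pi : ℂ) = (Real.pi : ℂ) := by
    exact_mod_cast Real.mul_self_sqrt Real.pi_pos.le
  set Iξ := ∫ ξ : ℝ, (((1 + ξ ^ 2) ^ (-(s / 2)) : ℝ) : ℂ) * Complex.exp (Complex.I * x * ξ)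
  set J := ∫ t in Ioi (0:ℝ), Real.exp (-t - x ^ 2 / (4 * t)) * t ^ ((s - 3) / 2)
  push_cast
  field_simp
  linear_combination (Real.sqrt Real.pi : ℂ) * E + (J : ℂ) * hss
end

section
/- For every s > 0, the Bessel kernel K_s is integrable on ℝ and ∫_ℝ K_s(x) dx = 1. -/
open Real MeasureTheory Set Filter

private lemma bessel_inner_eq (s t : ℝ) (ht : 0 < t) :
    (∫ x : ℝ, Real.exp (-t - x ^ 2 / (4 * t)) * t ^ ((s - 3) / 2)) =
      Real.exp (-t) * t ^ ((s - 3) / 2) * Real.sqrt (4 * Real.pi * t) := by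
  have hrw : ∀ x : ℝ, Real.exp (-t - x ^ 2 / (4 * t)) * t ^ ((s - 3) / 2) =
      (Real.exp (-t) * t ^ ((s - 3) / 2)) * Real.exp (-(1 / (4 * t)) * x ^ 2) := by
    intro x
    rw [show -t - x ^ 2 / (4 * t) = -t + (-(1 / (4 * t)) * x ^ 2) by field_simp; ring,
      Real.exp_add]
    ring
  simp_rw [hrw]
  rw [MeasureTheory.integral_const_mul, integral_gaussian]
  rw [show Real.pi / (1 / (4 * t)) = 4 * Real.pi * t by field_simp]

private lemma bessel_majorant_eq (s t : ℝ) (ht : t ∈ Set.Ioi (0 : ℝ)) :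
    Real.exp (-t) * t ^ ((s - 3) / 2) * Real.sqrt (4 * Real.pi * t) =
      Real.sqrt (4 * Real.pi) * (Real.exp (-t) * t ^ (s / 2 - 1)) := by
  simp only [Set.mem_Ioi] at ht
  rw [Real.sqrt_mul (by positivity) t, Real.sqrt_eq_rpow t,
    show Real.exp (-t) * t ^ ((s - 3) / 2) * (Real.sqrt (4 * Real.pi) * t ^ ((1:ℝ)/2)) =
      Real.sqrt (4 * Real.pi) * (Real.exp (-t) * (t ^ ((s - 3) / 2) * t ^ ((1:ℝ)/2))) by ring,
    ← Real.rpow_add ht, show (s - 3) / 2 + (1:ℝ)/2 = s / 2 - 1 by ring]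

private lemma bessel_majorant_integrable (s : ℝ) (hs : 0 < s) :
    IntegrableOn (fun t : ℝ => Real.exp (-t) * t ^ ((s - 3) / 2) * Real.sqrt (4 * Real.pi * t))
      (Set.Ioi 0) := by
  have hG : IntegrableOn (fun t : ℝ => Real.exp (-t) * t ^ (s / 2 - 1)) (Set.Ioi 0) :=
    Real.GammaIntegral_convergent (by positivity)
  have hG' : IntegrableOn (fun t : ℝ => Real.sqrt (4 * Real.pi) * (Real.exp (-t) * t ^ (s / 2 - 1)))
      (Set.Ioi 0) := hG.const_mul _
  exact hG'.congr_fun (fun t ht => (bessel_majorant_eq s t ht).symm) measurableSet_Ioi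

set_option maxHeartbeats 1000000 in
private lemma bessel_prod_integrable (s : ℝ) (hs : 0 < s) :
    Integrable (fun p : ℝ × ℝ => Real.exp (-p.1 - p.2 ^ 2 / (4 * p.1)) * p.1 ^ ((s - 3) / 2))
      ((volume.restrict (Set.Ioi 0)).prod volume) := by
  set f : ℝ × ℝ → ℝ := fun p => Real.exp (-p.1 - p.2 ^ 2 / (4 * p.1)) * p.1 ^ ((s - 3) / 2)
  have hmeas : AEStronglyMeasurable f ((volume.restrict (Set.Ioi 0)).prod volume) := by
    apply Measurable.aestronglyMeasurable
    fun_prop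
  rw [MeasureTheory.integrable_prod_iff hmeas]
  constructor
  · rw [ae_restrict_iff' measurableSet_Ioi]
    filter_upwards with t ht
    simp only [Set.mem_Ioi] at ht
    have hg : Integrable (fun x : ℝ => Real.exp (-(1 / (4 * t)) * x ^ 2)) :=
      integrable_exp_neg_mul_sq (by positivity)
    have := (hg.const_mul (Real.exp (-t) * t ^ ((s - 3) / 2)))
    refine this.congr (Filter.Eventually.of_forall fun x => ?_)
    simp only [f]
    rw [show -t - x ^ 2 / (4 * t) = -t + (-(1 / (4 * t)) * x ^ 2) by field_simp; ring,
      Real.exp_add]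
    ring
  · refine ((bessel_majorant_integrable s hs).congr_fun ?_ measurableSet_Ioi :
      IntegrableOn (fun t : ℝ => ∫ x : ℝ, ‖f (t, x)‖) (Set.Ioi 0) volume)
    intro t ht
    simp only [Set.mem_Ioi] at ht
    have hnn : ∀ x : ℝ, 0 ≤ f (t, x) := fun x => by
      have : (0:ℝ) < t ^ ((s - 3) / 2) := Real.rpow_pos_of_pos ht _
      positivity
    calc Real.exp (-t) * t ^ ((s - 3) / 2) * Real.sqrt (4 * Real.pi * t)
        = ∫ x : ℝ, f (t, x) := (bessel_inner_eq s t ht).symm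
      _ = ∫ x : ℝ, ‖f (t, x)‖ := by
          congr 1; funext x; exact (Real.norm_of_nonneg (hnn x)).symm

/-- for `s > 0`, the Bessel kernel is integrable with total mass one. -/
theorem besselKernel_integrable_integral_one (s : ℝ) (hs : 0 < s) :
    Integrable (besselKernel s) ∧ (∫ x : ℝ, besselKernel s x) = 1 := by
  have hprod := bessel_prod_integrable s hs
  have hg : Integrable (fun x : ℝ =>
      ∫ t in Set.Ioi (0:ℝ), Real.exp (-t - x ^ 2 / (4 * t)) * t ^ ((s - 3) / 2)) volume :=
    hprod.integral_prod_right
  constructor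
  · exact hg.const_mul _
  · have hΓ : 0 < Real.Gamma (s / 2) := Real.Gamma_pos_of_pos (by positivity)
    have hswap : (∫ t in Set.Ioi (0:ℝ), ∫ x : ℝ,
          Real.exp (-t - x ^ 2 / (4 * t)) * t ^ ((s - 3) / 2))
        = ∫ x : ℝ, ∫ t in Set.Ioi (0:ℝ),
          Real.exp (-t - x ^ 2 / (4 * t)) * t ^ ((s - 3) / 2) :=
      MeasureTheory.integral_integral_swap hprod
    have hval : (∫ t in Set.Ioi (0:ℝ), ∫ x : ℝ,
          Real.exp (-t - x ^ 2 / (4 * t)) * t ^ ((s - 3) / 2))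
        = Real.sqrt (4 * Real.pi) * Real.Gamma (s / 2) := by
      rw [MeasureTheory.setIntegral_congr_fun measurableSet_Ioi
          (g := fun t : ℝ => Real.sqrt (4 * Real.pi) * (Real.exp (-t) * t ^ (s / 2 - 1)))
          (fun t ht => (bessel_inner_eq s t ht).trans (bessel_majorant_eq s t ht)),
        MeasureTheory.integral_const_mul, Real.Gamma_eq_integral (by positivity : 0 < s / 2)]
    have h2 : Real.sqrt (4 * Real.pi) = 2 * Real.sqrt Real.pi := by
      rw [Real.sqrt_mul (by norm_num), show Real.sqrt 4 = 2 by
        rw [show (4:ℝ) = 2 ^ 2 by norm_num, Real.sqrt_sq (by norm_num)]]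
    unfold besselKernel
    rw [MeasureTheory.integral_const_mul, ← hswap, hval, h2]
    have hπ : 0 < Real.sqrt Real.pi := Real.sqrt_pos.2 Real.pi_pos
    field_simp
end

section
/- For every s ∈ (0,1) there exist δ ∈ (0,1] and constants c₁, c₂ > 0 such that c₁ · |x|^{s−1} ≤ K_s(x) ≤ c₂ · |x|^{s−1} for all x with 0 < |x| ≤ δ; in particular K_s(x) → ∞ as x → 0. -/
open Real MeasureTheory Set Filter

private lemma exp_neg_le_inv_sq {y : ℝ} (hy : 0 < y) : Real.exp (-y) ≤ 4 / y ^ 2 := by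
  have h1 : y / 2 + 1 ≤ Real.exp (y / 2) := Real.add_one_le_exp _
  have h2 : y ^ 2 / 4 ≤ Real.exp y := by
    have hsq : (y / 2 + 1) ^ 2 ≤ (Real.exp (y / 2)) ^ 2 := by
      have h0 : (0:ℝ) ≤ y / 2 + 1 := by positivity
      exact pow_le_pow_left₀ h0 h1 2
    have he : Real.exp (y / 2) ^ 2 = Real.exp y := by
      rw [← Real.exp_nat_mul]; norm_num; ring_nf
    nlinarith [sq_nonneg (y/2), Real.exp_pos (y/2)]
  have hy2 : (0:ℝ) < y ^ 2 / 4 := by positivity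
  rw [Real.exp_neg]
  calc (Real.exp y)⁻¹ ≤ (y ^ 2 / 4)⁻¹ := inv_anti₀ hy2 h2
    _ = 4 / y ^ 2 := by field_simp

private lemma exp_neg_le_inv {y : ℝ} (hy : 0 < y) : Real.exp (-y) ≤ y⁻¹ := by
  have h1 : y ≤ Real.exp y := by nlinarith [Real.add_one_le_exp y]
  rw [Real.exp_neg]
  exact inv_anti₀ hy h1

private lemma besselIntegrand_integrableOn {s : ℝ} (hs0 : 0 < s) {x : ℝ} (hx : x ≠ 0) :
    IntegrableOn (fun t => Real.exp (-t - x ^ 2 / (4 * t)) * t ^ ((s - 3) / 2)) (Ioi (0:ℝ)) := by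
  have hx2 : (0:ℝ) < x ^ 2 := by positivity
  have ha : (0:ℝ) < x ^ 2 / 4 := by positivity
  have hg : IntegrableOn
      (fun t => (4 / (x ^ 2 / 4) ^ 2) * (Real.exp (-t) * t ^ ((s + 3) / 2 - 1))) (Ioi (0:ℝ)) :=
    (Real.GammaIntegral_convergent (by linarith : (0:ℝ) < (s + 3) / 2)).const_mul _
  refine hg.mono' ?_ ?_
  · apply Measurable.aestronglyMeasurable
    fun_prop
  · filter_upwards [ae_restrict_mem measurableSet_Ioi] with t ht
    have ht : (0:ℝ) < t := ht
    have hfnn : (0:ℝ) ≤ Real.exp (-t - x ^ 2 / (4 * t)) * t ^ ((s - 3) / 2) :=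
      mul_nonneg (Real.exp_pos _).le (Real.rpow_nonneg ht.le _)
    rw [Real.norm_eq_abs, abs_of_nonneg hfnn]
    have e1 : -t - x ^ 2 / (4 * t) = -t + -(x ^ 2 / 4 / t) := by
      rw [div_div]; ring
    rw [e1, Real.exp_add]
    have h2 : Real.exp (-(x ^ 2 / 4 / t)) ≤ 4 / (x ^ 2 / 4 / t) ^ 2 :=
      exp_neg_le_inv_sq (by positivity)
    have h3 : (4 : ℝ) / (x ^ 2 / 4 / t) ^ 2 = (4 / (x ^ 2 / 4) ^ 2) * t ^ (2:ℕ) := by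
      field_simp
    have hpnn : (0:ℝ) ≤ t ^ ((s - 3) / 2) := Real.rpow_nonneg ht.le _
    calc Real.exp (-t) * Real.exp (-(x ^ 2 / 4 / t)) * t ^ ((s - 3) / 2)
        ≤ Real.exp (-t) * ((4 / (x ^ 2 / 4) ^ 2) * t ^ (2:ℕ)) * t ^ ((s - 3) / 2) := by
          rw [← h3]; gcongr
      _ = (4 / (x ^ 2 / 4) ^ 2) * (Real.exp (-t) * (t ^ ((s - 3) / 2) * t ^ (2:ℕ))) := by ring
      _ = (4 / (x ^ 2 / 4) ^ 2) * (Real.exp (-t) * t ^ ((s + 3) / 2 - 1)) := by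
          rw [← Real.rpow_natCast t 2, ← Real.rpow_add ht]
          congr 1
          ring

private lemma apow_eq {s x : ℝ} (hx : x ≠ 0) :
    (x ^ 2 / 4) ^ ((s - 1) / 2) = |x| ^ (s - 1) / 2 ^ (s - 1) := by
  have h1 : x ^ 2 / 4 = (|x| / 2) ^ (2:ℕ) := by rw [div_pow, sq_abs]; norm_num
  rw [h1, ← Real.rpow_natCast (|x| / 2) 2, ← Real.rpow_mul (by positivity)]
  rw [show ((2:ℕ):ℝ) * ((s - 1) / 2) = s - 1 by push_cast; ring]
  rw [Real.div_rpow (abs_nonneg x) (by norm_num)]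

private lemma apow_le {s x : ℝ} (hs0 : 0 < s) (hs1 : s < 1) (hx : x ≠ 0) :
    (x ^ 2 / 4) ^ ((s - 1) / 2) ≤ 2 * |x| ^ (s - 1) := by
  rw [apow_eq hx]
  have habs : (0:ℝ) < |x| ^ (s - 1) := Real.rpow_pos_of_pos (abs_pos.2 hx) _
  have h2 : (1:ℝ) / 2 ≤ 2 ^ (s - 1) := by
    calc (1:ℝ) / 2 = 2 ^ (-1:ℝ) := by rw [Real.rpow_neg_one]; norm_num
      _ ≤ 2 ^ (s - 1) := Real.rpow_le_rpow_of_exponent_le one_le_two (by linarith)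
  rw [div_le_iff₀ (by positivity)]
  nlinarith

private lemma int_rpow_Ioc_zero {p : ℝ} (hp : (-1:ℝ) < p) {a : ℝ} (ha : 0 < a) :
    ∫ t in Ioc (0:ℝ) a, t ^ p = a ^ (p + 1) / (p + 1) := by
  rw [← intervalIntegral.integral_of_le ha.le, integral_rpow (Or.inl hp),
    Real.zero_rpow (by linarith : p + 1 ≠ 0)]
  ring

private lemma bessel_upper {s : ℝ} (hs0 : 0 < s) (hs1 : s < 1) {x : ℝ}
    (hx0 : 0 < |x|) (hx1 : |x| ≤ 1) :
    (∫ t in Ioi (0:ℝ), Real.exp (-t - x ^ 2 / (4 * t)) * t ^ ((s - 3) / 2)) ≤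
      (4 / (s + 1) + 4 / (1 - s) + 1) * |x| ^ (s - 1) := by
  have hx : x ≠ 0 := abs_pos.1 hx0
  have hI := besselIntegrand_integrableOn hs0 hx
  set f : ℝ → ℝ := fun t => Real.exp (-t - x ^ 2 / (4 * t)) * t ^ ((s - 3) / 2) with hf
  set a : ℝ := x ^ 2 / 4 with ha'
  have ha : (0:ℝ) < a := by rw [ha']; positivity
  have hapow := apow_le hs0 hs1 hx
  rw [← ha'] at hapow
  have hxsq : x ^ 2 ≤ 1 := by rw [← sq_abs]; nlinarith
  have ha1 : a ≤ 1 := by rw [ha']; linarith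
  clear_value a f
  have hIa : IntegrableOn f (Ioc 0 a) := hI.mono_set Ioc_subset_Ioi_self
  have hIb : IntegrableOn f (Ioc a 1) := hI.mono_set (fun t ht => ha.trans ht.1)
  have hIc : IntegrableOn f (Ioi 1) := hI.mono_set (Ioi_subset_Ioi zero_le_one)
  have habs : (0:ℝ) < |x| ^ (s - 1) := Real.rpow_pos_of_pos hx0 _
  -- split the integral
  have e1 : ∫ t in Ioi (0:ℝ), f t = (∫ t in Ioc (0:ℝ) 1, f t) + ∫ t in Ioi (1:ℝ), f t := by
    rw [← setIntegral_union Ioc_disjoint_Ioi_same measurableSet_Ioi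
      (hI.mono_set Ioc_subset_Ioi_self) hIc, Ioc_union_Ioi_eq_Ioi zero_le_one]
  have e2 : ∫ t in Ioc (0:ℝ) 1, f t = (∫ t in Ioc (0:ℝ) a, f t) + ∫ t in Ioc a 1, f t := by
    rw [← setIntegral_union (Ioc_disjoint_Ioc_of_le le_rfl) measurableSet_Ioc hIa hIb,
      Ioc_union_Ioc_eq_Ioc ha.le ha1]
  -- piece 1
  have hp1 : (∫ t in Ioc (0:ℝ) a, f t) ≤ 4 / (s + 1) * |x| ^ (s - 1) := by
    have hrint : IntegrableOn (fun t => a⁻¹ * t ^ ((s - 1) / 2)) (Ioc 0 a) := by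
      have h := (intervalIntegral.intervalIntegrable_rpow'
        (show (-1:ℝ) < (s - 1) / 2 by linarith) (a := 0) (b := a))
      exact ((intervalIntegrable_iff_integrableOn_Ioc_of_le ha.le).1 h).const_mul _
    have hle : ∀ t ∈ Ioc (0:ℝ) a, f t ≤ a⁻¹ * t ^ ((s - 1) / 2) := by
      intro t ht
      have ht0 : (0:ℝ) < t := ht.1
      have e3 : -t - x ^ 2 / (4 * t) = -t + -(a / t) := by rw [ha', div_div]; ring
      have h4 : Real.exp (-t + -(a / t)) ≤ t / a := by
        calc Real.exp (-t + -(a / t)) ≤ Real.exp (-(a / t)) := by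
              apply Real.exp_le_exp.2; nlinarith
          _ ≤ (a / t)⁻¹ := exp_neg_le_inv (by positivity)
          _ = t / a := by rw [inv_div]
      calc f t = Real.exp (-t + -(a / t)) * t ^ ((s - 3) / 2) := by
            simp only [hf]; rw [e3]
        _ ≤ (t / a) * t ^ ((s - 3) / 2) :=
            mul_le_mul_of_nonneg_right h4 (Real.rpow_nonneg ht0.le _)
        _ = a⁻¹ * (t ^ ((s - 3) / 2) * t) := by ring
        _ = a⁻¹ * t ^ ((s - 1) / 2) := by
            rw [← Real.rpow_add_one ht0.ne' ((s - 3) / 2),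
              show (s - 3) / 2 + (1:ℝ) = (s - 1) / 2 by ring]
    have hval : (∫ t in Ioc (0:ℝ) a, a⁻¹ * t ^ ((s - 1) / 2)) =
        (2 / (s + 1)) * a ^ ((s - 1) / 2) := by
      rw [integral_const_mul, int_rpow_Ioc_zero (by linarith) ha,
        show (s - 1) / 2 + 1 = (s - 1) / 2 + (1:ℝ) by ring,
        Real.rpow_add ha, Real.rpow_one]
      calc a⁻¹ * (a ^ ((s - 1) / 2) * a / ((s - 1) / 2 + 1))
          = a ^ ((s - 1) / 2) * (a⁻¹ * a) / ((s - 1) / 2 + 1) := by ring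
        _ = a ^ ((s - 1) / 2) / ((s - 1) / 2 + 1) := by
            rw [inv_mul_cancel₀ ha.ne', mul_one]
        _ = 2 / (s + 1) * a ^ ((s - 1) / 2) := by
            rw [show (s - 1) / 2 + 1 = (s + 1) / 2 by ring, div_eq_mul_inv, inv_div]
            ring
    have hstep := setIntegral_mono_on hIa hrint measurableSet_Ioc hle
    rw [hval] at hstep
    calc (∫ t in Ioc (0:ℝ) a, f t) ≤ (2 / (s + 1)) * a ^ ((s - 1) / 2) := hstep
      _ ≤ (2 / (s + 1)) * (2 * |x| ^ (s - 1)) :=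
          mul_le_mul_of_nonneg_left hapow (by positivity)
      _ = 4 / (s + 1) * |x| ^ (s - 1) := by ring
  -- piece 2
  have hp2 : (∫ t in Ioc a (1:ℝ), f t) ≤ 4 / (1 - s) * |x| ^ (s - 1) := by
    have hrint : IntegrableOn (fun t => t ^ ((s - 3) / 2)) (Ioc a 1) := by
      refine (ContinuousOn.integrableOn_Icc ?_).mono_set Ioc_subset_Icc_self
      intro t ht
      have : t ≠ 0 := by have := ht.1; intro h; rw [h] at this; linarith
      exact (Real.continuousAt_rpow_const _ _ (Or.inl this)).continuousWithinAt
    have hle : ∀ t ∈ Ioc a (1:ℝ), f t ≤ t ^ ((s - 3) / 2) := by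
      intro t ht
      have ht0 : (0:ℝ) < t := ha.trans ht.1
      have hexp : Real.exp (-t - x ^ 2 / (4 * t)) ≤ 1 := by
        rw [Real.exp_le_one_iff]
        have : (0:ℝ) ≤ x ^ 2 / (4 * t) := by positivity
        linarith
      simp only [hf]
      calc Real.exp (-t - x ^ 2 / (4 * t)) * t ^ ((s - 3) / 2)
          ≤ 1 * t ^ ((s - 3) / 2) :=
            mul_le_mul_of_nonneg_right hexp (Real.rpow_nonneg ht0.le _)
        _ = t ^ ((s - 3) / 2) := one_mul _
    have hval : (∫ t in Ioc a (1:ℝ), t ^ ((s - 3) / 2)) =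
        (a ^ ((s - 1) / 2) - 1) / ((1 - s) / 2) := by
      rw [← intervalIntegral.integral_of_le ha1,
        integral_rpow (Or.inr ⟨by intro h; norm_num at h; linarith,
          by simp [Set.mem_uIcc]; linarith⟩)]
      rw [Real.one_rpow, show (s - 3) / 2 + 1 = (s - 1) / 2 by ring]
      rw [div_eq_div_iff (by intro h; simp at h; linarith : (s - 1) / 2 ≠ 0)
        (by intro h; simp at h; linarith : (1 - s) / 2 ≠ 0)]
      ring
    have hstep := setIntegral_mono_on hIb hrint measurableSet_Ioc hle
    rw [hval] at hstep
    have hA : (0:ℝ) < a ^ ((s - 1) / 2) := Real.rpow_pos_of_pos ha _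
    calc (∫ t in Ioc a (1:ℝ), f t) ≤ (a ^ ((s - 1) / 2) - 1) / ((1 - s) / 2) := hstep
      _ ≤ a ^ ((s - 1) / 2) / ((1 - s) / 2) := by
          apply div_le_div_of_nonneg_right ?_ (by linarith)
          · linarith
      _ = (2 / (1 - s)) * a ^ ((s - 1) / 2) := by
          field_simp
      _ ≤ (2 / (1 - s)) * (2 * |x| ^ (s - 1)) := by
          have h1s : (0:ℝ) < 1 - s := by linarith
          exact mul_le_mul_of_nonneg_left hapow (by positivity)
      _ = 4 / (1 - s) * |x| ^ (s - 1) := by ring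
  -- piece 3
  have hp3 : (∫ t in Ioi (1:ℝ), f t) ≤ 1 * |x| ^ (s - 1) := by
    have hrint : IntegrableOn (fun t : ℝ => Real.exp (-t)) (Ioi 1) := by
      simpa using exp_neg_integrableOn_Ioi 1 one_pos
    have hle : ∀ t ∈ Ioi (1:ℝ), f t ≤ Real.exp (-t) := by
      intro t ht
      have ht1 : (1:ℝ) ≤ t := le_of_lt ht
      have ht0 : (0:ℝ) < t := lt_of_lt_of_le one_pos ht1
      have h1 : t ^ ((s - 3) / 2) ≤ 1 :=
        Real.rpow_le_one_of_one_le_of_nonpos ht1 (by linarith)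
      have h2 : Real.exp (-t - x ^ 2 / (4 * t)) ≤ Real.exp (-t) := by
        apply Real.exp_le_exp.2
        have : (0:ℝ) ≤ x ^ 2 / (4 * t) := by positivity
        linarith
      simp only [hf]
      calc Real.exp (-t - x ^ 2 / (4 * t)) * t ^ ((s - 3) / 2)
          ≤ Real.exp (-t) * 1 :=
            mul_le_mul h2 h1 (Real.rpow_nonneg ht0.le _) (Real.exp_pos _).le
        _ = Real.exp (-t) := mul_one _
    have hstep := setIntegral_mono_on hIc hrint measurableSet_Ioi hle
    rw [integral_exp_neg_Ioi] at hstep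
    have h1 : (1:ℝ) ≤ |x| ^ (s - 1) :=
      Real.one_le_rpow_of_pos_of_le_one_of_nonpos hx0 hx1 (by linarith)
    have h2 : Real.exp (-1) ≤ 1 := by
      rw [Real.exp_le_one_iff]; norm_num
    calc (∫ t in Ioi (1:ℝ), f t) ≤ Real.exp (-1) := hstep
      _ ≤ 1 := h2
      _ ≤ 1 * |x| ^ (s - 1) := by rw [one_mul]; exact h1
  calc ∫ t in Ioi (0:ℝ), f t
      = (∫ t in Ioc (0:ℝ) a, f t) + (∫ t in Ioc a 1, f t) + ∫ t in Ioi (1:ℝ), f t := by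
        rw [e1, e2]
    _ ≤ 4 / (s + 1) * |x| ^ (s - 1) + 4 / (1 - s) * |x| ^ (s - 1) + 1 * |x| ^ (s - 1) := by
        gcongr
    _ = (4 / (s + 1) + 4 / (1 - s) + 1) * |x| ^ (s - 1) := by ring

private lemma bessel_lower {s : ℝ} (hs0 : 0 < s) (hs1 : s < 1) {x : ℝ}
    (hx0 : 0 < |x|) (hx1 : |x| ≤ 1) :
    (Real.exp (-(3/2 : ℝ)) / 4) * |x| ^ (s - 1) ≤
      ∫ t in Ioi (0:ℝ), Real.exp (-t - x ^ 2 / (4 * t)) * t ^ ((s - 3) / 2) := by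
  have hx : x ≠ 0 := abs_pos.1 hx0
  have hI := besselIntegrand_integrableOn hs0 hx
  set f : ℝ → ℝ := fun t => Real.exp (-t - x ^ 2 / (4 * t)) * t ^ ((s - 3) / 2) with hf
  have hx2 : (0:ℝ) < x ^ 2 := by positivity
  have hxsq : x ^ 2 ≤ 1 := by rw [← sq_abs]; nlinarith
  have hsub : Ioc (x ^ 2 / 4) (x ^ 2 / 2) ⊆ Ioi (0:ℝ) :=
    fun t ht => lt_trans (by positivity) ht.1
  -- pointwise lower bound on the small interval
  have hm : ∀ t ∈ Ioc (x ^ 2 / 4) (x ^ 2 / 2),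
      Real.exp (-(3/2 : ℝ)) * (x ^ 2 / 2) ^ ((s - 3) / 2) ≤ f t := by
    intro t ht
    have ht0 : (0:ℝ) < t := lt_trans (by positivity) ht.1
    have hexp : Real.exp (-(3/2 : ℝ)) ≤ Real.exp (-t - x ^ 2 / (4 * t)) := by
      apply Real.exp_le_exp.2
      have h1 : t ≤ 1 / 2 := le_trans ht.2 (by linarith)
      have h2 : x ^ 2 / (4 * t) ≤ 1 := by
        rw [div_le_one (by positivity)]
        nlinarith [ht.1]
      linarith
    have hpow : (x ^ 2 / 2) ^ ((s - 3) / 2) ≤ t ^ ((s - 3) / 2) :=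
      Real.rpow_le_rpow_of_nonpos ht0 ht.2 (by linarith)
    simp only [hf]
    exact mul_le_mul hexp hpow (Real.rpow_nonneg (by positivity) _) (Real.exp_pos _).le
  -- integral over the small interval
  have hconst : (∫ _ in Ioc (x ^ 2 / 4) (x ^ 2 / 2),
      Real.exp (-(3/2 : ℝ)) * (x ^ 2 / 2) ^ ((s - 3) / 2)) =
      (x ^ 2 / 4) * (Real.exp (-(3/2 : ℝ)) * (x ^ 2 / 2) ^ ((s - 3) / 2)) := by
    rw [setIntegral_const, Real.volume_real_Ioc, smul_eq_mul,
      max_eq_left (by linarith : (0:ℝ) ≤ x ^ 2 / 2 - x ^ 2 / 4)]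
    ring_nf
  have h1 : (∫ t in Ioc (x ^ 2 / 4) (x ^ 2 / 2), f t) ≤ ∫ t in Ioi (0:ℝ), f t := by
    apply setIntegral_mono_set hI ?_ (HasSubset.Subset.eventuallyLE hsub)
    filter_upwards [ae_restrict_mem measurableSet_Ioi] with t ht
    exact mul_nonneg (Real.exp_pos _).le (Real.rpow_nonneg (le_of_lt ht) _)
  have h2 : (x ^ 2 / 4) * (Real.exp (-(3/2 : ℝ)) * (x ^ 2 / 2) ^ ((s - 3) / 2)) ≤
      ∫ t in Ioc (x ^ 2 / 4) (x ^ 2 / 2), f t := by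
    rw [← hconst]
    exact setIntegral_mono_on (integrableOn_const (by
      rw [Real.volume_Ioc]; exact ENNReal.ofReal_ne_top))
      (hI.mono_set hsub) measurableSet_Ioc hm
  -- algebra
  have h3 : (Real.exp (-(3/2 : ℝ)) / 4) * |x| ^ (s - 1) ≤
      (x ^ 2 / 4) * (Real.exp (-(3/2 : ℝ)) * (x ^ 2 / 2) ^ ((s - 3) / 2)) := by
    have hb : (x ^ 2) ^ ((s - 3) / 2) ≤ (x ^ 2 / 2) ^ ((s - 3) / 2) :=
      Real.rpow_le_rpow_of_nonpos (by positivity) (by linarith) (by linarith)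
    have he : (x ^ 2) ^ ((s - 3) / 2) = |x| ^ (s - 3) := by
      rw [← sq_abs, ← Real.rpow_natCast |x| 2, ← Real.rpow_mul (abs_nonneg x)]
      norm_num
      rw [show 2 * ((s - 3) / 2) = s - 3 by ring]
    have he2 : x ^ 2 * |x| ^ (s - 3) = |x| ^ (s - 1) := by
      rw [← sq_abs, ← Real.rpow_natCast |x| 2, ← Real.rpow_add hx0]
      norm_num
      rw [show 2 + (s - 3) = s - 1 by ring]
    calc (Real.exp (-(3/2 : ℝ)) / 4) * |x| ^ (s - 1)
        = (x ^ 2 / 4) * (Real.exp (-(3/2 : ℝ)) * |x| ^ (s - 3)) := by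
          rw [← he2]; ring
      _ = (x ^ 2 / 4) * (Real.exp (-(3/2 : ℝ)) * (x ^ 2) ^ ((s - 3) / 2)) := by rw [he]
      _ ≤ (x ^ 2 / 4) * (Real.exp (-(3/2 : ℝ)) * (x ^ 2 / 2) ^ ((s - 3) / 2)) := by
          apply mul_le_mul_of_nonneg_left _ (by positivity)
          exact mul_le_mul_of_nonneg_left hb (Real.exp_pos _).le
  linarith

/-- for `s ∈ (0,1)` the Bessel kernel behaves like `|x|^{s-1}` near the origin;
in particular it blows up at the origin. -/
theorem besselKernel_singularity_small_s (s : ℝ) (hs0 : 0 < s) (hs1 : s < 1) :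
    (∃ δ : ℝ, 0 < δ ∧ δ ≤ 1 ∧ ∃ c₁ c₂ : ℝ, 0 < c₁ ∧ 0 < c₂ ∧
      ∀ x : ℝ, 0 < |x| → |x| ≤ δ →
        c₁ * |x| ^ (s - 1) ≤ besselKernel s x ∧ besselKernel s x ≤ c₂ * |x| ^ (s - 1)) ∧
    Tendsto (besselKernel s) (nhdsWithin 0 {(0 : ℝ)}ᶜ) atTop := by
  have hC : 0 < 1 / (2 * Real.sqrt Real.pi * Real.Gamma (s / 2)) := by
    have h1 : 0 < Real.sqrt Real.pi := Real.sqrt_pos.2 Real.pi_pos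
    have h2 : 0 < Real.Gamma (s / 2) := Real.Gamma_pos_of_pos (by linarith)
    positivity
  set C := 1 / (2 * Real.sqrt Real.pi * Real.Gamma (s / 2)) with hCdef
  set c₁ := C * (Real.exp (-(3/2 : ℝ)) / 4) with hc1
  set c₂ := C * (4 / (s + 1) + 4 / (1 - s) + 1) with hc2
  have hc₁ : 0 < c₁ := by rw [hc1]; positivity
  have hc₂ : 0 < c₂ := by
    have h1s : (0:ℝ) < 1 - s := by linarith
    have h1s' : (0:ℝ) < s + 1 := by linarith
    rw [hc2]; positivity
  have hmain : ∀ x : ℝ, 0 < |x| → |x| ≤ 1 →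
      c₁ * |x| ^ (s - 1) ≤ besselKernel s x ∧ besselKernel s x ≤ c₂ * |x| ^ (s - 1) := by
    intro x h0 h1
    unfold besselKernel
    rw [← hCdef]
    constructor
    · rw [hc1]
      calc C * (Real.exp (-(3/2 : ℝ)) / 4) * |x| ^ (s - 1)
          = C * ((Real.exp (-(3/2 : ℝ)) / 4) * |x| ^ (s - 1)) := by ring
        _ ≤ C * ∫ t in Set.Ioi (0:ℝ), Real.exp (-t - x ^ 2 / (4 * t)) * t ^ ((s - 3) / 2) :=
            mul_le_mul_of_nonneg_left (bessel_lower hs0 hs1 h0 h1) hC.le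
    · rw [hc2]
      calc C * ∫ t in Set.Ioi (0:ℝ), Real.exp (-t - x ^ 2 / (4 * t)) * t ^ ((s - 3) / 2)
          ≤ C * ((4 / (s + 1) + 4 / (1 - s) + 1) * |x| ^ (s - 1)) :=
            mul_le_mul_of_nonneg_left (bessel_upper hs0 hs1 h0 h1) hC.le
        _ = C * (4 / (s + 1) + 4 / (1 - s) + 1) * |x| ^ (s - 1) := by ring
  refine ⟨⟨1, one_pos, le_rfl, c₁, c₂, hc₁, hc₂, fun x h0 h1 => hmain x h0 h1⟩, ?_⟩
  have habs1 : ∀ᶠ x : ℝ in nhdsWithin 0 {(0 : ℝ)}ᶜ, |x| ≤ 1 := by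
    have h : ∀ᶠ x : ℝ in nhds (0:ℝ), |x| ≤ 1 := by
      filter_upwards [Metric.closedBall_mem_nhds (0:ℝ) one_pos] with x hx
      simpa [Real.dist_eq] using hx
    exact h.filter_mono nhdsWithin_le_nhds
  have hlow : ∀ᶠ x in nhdsWithin 0 {(0 : ℝ)}ᶜ, c₁ * |x| ^ (s - 1) ≤ besselKernel s x := by
    filter_upwards [self_mem_nhdsWithin, habs1] with x hx h1
    exact (hmain x (abs_pos.2 hx) h1).1
  apply tendsto_atTop_mono' _ hlow
  have h1 : Tendsto (fun x : ℝ => |x|) (nhdsWithin 0 {(0 : ℝ)}ᶜ) (nhdsWithin 0 (Set.Ioi 0)) := by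
    rw [tendsto_nhdsWithin_iff]
    constructor
    · exact (continuous_abs.tendsto' 0 0 abs_zero).mono_left nhdsWithin_le_nhds
    · filter_upwards [self_mem_nhdsWithin] with x hx
      exact abs_pos.2 hx
  have h2 : Tendsto (fun x : ℝ => (|x|⁻¹) ^ (1 - s)) (nhdsWithin 0 {(0 : ℝ)}ᶜ) atTop :=
    (tendsto_rpow_atTop (by linarith : (0:ℝ) < 1 - s)).comp (tendsto_inv_nhdsGT_zero.comp h1)
  have h3 : Tendsto (fun x : ℝ => |x| ^ (s - 1)) (nhdsWithin 0 {(0 : ℝ)}ᶜ) atTop := by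
    refine h2.congr (fun x => ?_)
    rw [Real.inv_rpow (abs_nonneg x), ← Real.rpow_neg (abs_nonneg x),
      show -(1 - s) = s - 1 by ring]
  exact h3.const_mul_atTop hc₁
end

section
/- For s = 1, the Bessel kernel has a logarithmic singularity at the origin: lim_{x → 0⁺} K_1(x) / log(1/x) = 1/π. -/
open Real MeasureTheory Set Filter

/-- Change of variables `t ↦ c/t` on `(0, ∞)` preserves `∫ F t / t` form. -/
lemma integral_inv_scale (c : ℝ) (hc : 0 < c) (F : ℝ → ℝ) :
    (∫ t in Ioi (0:ℝ), F (c / t) / t) = ∫ t in Ioi (0:ℝ), F t / t := by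
  have h1 := integral_comp_rpow_Ioi (fun t => F t / t) (p := -1) (by norm_num)
  have h2 : (∫ x in Ioi (0:ℝ), (|(-1:ℝ)| * x ^ ((-1:ℝ) - 1)) • (F (x ^ (-1:ℝ)) / x ^ (-1:ℝ)))
      = ∫ x in Ioi (0:ℝ), F x⁻¹ / x := by
    refine setIntegral_congr_fun measurableSet_Ioi (fun x hx => ?_)
    have hx0 : (0:ℝ) < x := hx
    rw [Real.rpow_neg_one, show ((-1:ℝ) - 1) = (-2 : ℝ) by norm_num]
    have hx2 : x ^ (-2:ℝ) = (x^2)⁻¹ := by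
      rw [show (-2:ℝ) = (-1) + (-1) by norm_num, Real.rpow_add hx0, Real.rpow_neg_one, sq,
        mul_inv]
    rw [hx2]
    field_simp
    ring
    rw [inv_pow, mul_inv_cancel₀ (pow_ne_zero 2 hx0.ne'), one_mul]
  have key : (∫ t in Ioi (0:ℝ), F (c / t) / t) = ∫ x in Ioi (0:ℝ), F x⁻¹ / x := by
    have h3 := integral_comp_mul_left_Ioi (fun x => F x⁻¹ / x) 0 (b := c⁻¹) (inv_pos.2 hc)
    simp only [mul_zero, smul_eq_mul, inv_inv] at h3
    -- h3 : ∫ x in Ioi 0, F (c⁻¹ * x)⁻¹ / (c⁻¹ * x) = c * ∫ x in Ioi 0, F x⁻¹ / x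
    have h4 : (∫ x in Ioi (0:ℝ), F (c⁻¹ * x)⁻¹ / (c⁻¹ * x))
        = ∫ x in Ioi (0:ℝ), c * (F (c / x) / x) := by
      refine setIntegral_congr_fun measurableSet_Ioi (fun t ht => ?_)
      have ht0 : (0:ℝ) < t := ht
      rw [show (c⁻¹ * t)⁻¹ = c / t by field_simp]
      field_simp
    rw [h4, MeasureTheory.integral_const_mul] at h3
    have := mul_left_cancel₀ hc.ne' h3
    exact this
  rw [key, ← h2, h1]

lemma contOn_f (c : ℝ) : ContinuousOn (fun t : ℝ => Real.exp (-t - c/t) / t) (Ioi 0) := by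
  apply ContinuousOn.div
  · exact (Real.continuous_exp.comp_continuousOn
      ((continuousOn_id.neg).sub (continuousOn_const.div continuousOn_id
        (fun t ht => ne_of_gt ht))))
  · exact continuousOn_id
  · exact fun t ht => ne_of_gt ht

lemma integrableOn_f (c : ℝ) (hc : 0 < c) :
    IntegrableOn (fun t : ℝ => Real.exp (-t - c/t) / t) (Ioi 0) := by
  have hmeas : AEStronglyMeasurable (fun t : ℝ => Real.exp (-t - c/t) / t)
      (volume.restrict (Ioi 0)) :=
    (contOn_f c).aestronglyMeasurable measurableSet_Ioi
  have hint : IntegrableOn (fun t : ℝ => c⁻¹ * Real.exp (-1 * t)) (Ioi 0) :=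
    (exp_neg_integrableOn_Ioi 0 one_pos).const_mul _
  refine Integrable.mono' hint hmeas ?_
  filter_upwards [ae_restrict_mem measurableSet_Ioi] with t ht
  have ht0 : (0:ℝ) < t := ht
  have hpos : 0 ≤ Real.exp (-t - c/t) / t := div_nonneg (Real.exp_pos _).le ht0.le
  rw [Real.norm_of_nonneg hpos]
  have key : Real.exp (-(c/t)) / t ≤ c⁻¹ := by
    have h1 : c / t ≤ Real.exp (c / t) := by
      have := Real.add_one_le_exp (c / t); linarith
    have h2 : c ≤ t * Real.exp (c / t) := by
      have h3 := mul_le_mul_of_nonneg_left h1 ht0.le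
      rw [mul_div_cancel₀ _ ht0.ne'] at h3
      exact h3
    have h4 : Real.exp (-(c/t)) / t = (t * Real.exp (c/t))⁻¹ := by
      rw [Real.exp_neg]; field_simp
    rw [h4]
    exact inv_anti₀ hc h2
  have hsplit : Real.exp (-t - c/t) = Real.exp (-t) * Real.exp (-(c/t)) := by
    rw [← Real.exp_add]; ring_nf
  calc Real.exp (-t - c/t) / t = Real.exp (-t) * (Real.exp (-(c/t)) / t) := by
        rw [hsplit]; ring
    _ ≤ Real.exp (-t) * c⁻¹ := mul_le_mul_of_nonneg_left key (Real.exp_pos _).le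
    _ = c⁻¹ * Real.exp (-1 * t) := by rw [neg_one_mul]; ring

lemma integral_eq_two_half (x : ℝ) (hx : 0 < x) :
    (∫ t in Ioi (0:ℝ), Real.exp (-t - (x^2/4)/t) / t)
      = 2 * ∫ t in Ioi (x/2), Real.exp (-t - (x^2/4)/t) / t := by
  set c := x^2/4 with hcdef
  have hc : 0 < c := by positivity
  have hx2 : 0 < x/2 := by positivity
  have hsym : (∫ t in Ioc (0:ℝ) (x/2), Real.exp (-t - c/t) / t)
      = ∫ t in Ioi (x/2), Real.exp (-t - c/t) / t := by
    have key := integral_inv_scale c hc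
      ((Ioc (0:ℝ) (x/2)).indicator (fun t => Real.exp (-t - c/t)))
    have hR : (∫ t in Ioi (0:ℝ),
        (Ioc (0:ℝ) (x/2)).indicator (fun t => Real.exp (-t - c/t)) t / t)
        = ∫ t in Ioc (0:ℝ) (x/2), Real.exp (-t - c/t) / t := by
      have heq : (fun t : ℝ =>
          (Ioc (0:ℝ) (x/2)).indicator (fun t => Real.exp (-t - c/t)) t / t)
          = (Ioc (0:ℝ) (x/2)).indicator (fun t => Real.exp (-t - c/t) / t) := by
        funext t
        by_cases hmem : t ∈ Ioc (0:ℝ) (x/2) <;> simp [hmem]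
      rw [heq, setIntegral_indicator measurableSet_Ioc,
        inter_eq_self_of_subset_right (fun t ht => ht.1)]
    have hL : (∫ t in Ioi (0:ℝ),
        (Ioc (0:ℝ) (x/2)).indicator (fun t => Real.exp (-t - c/t)) (c/t) / t)
        = ∫ t in Ioi (x/2), Real.exp (-t - c/t) / t := by
      have heq : ∀ t ∈ Ioi (0:ℝ),
          (Ioc (0:ℝ) (x/2)).indicator (fun t => Real.exp (-t - c/t)) (c/t) / t
          = (Ici (x/2)).indicator (fun t => Real.exp (-t - c/t) / t) t := by
        intro t ht
        have ht0 : (0:ℝ) < t := ht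
        have hiff : c/t ∈ Ioc (0:ℝ) (x/2) ↔ t ∈ Ici (x/2) := by
          constructor
          · rintro ⟨h1, h2⟩
            rw [mem_Ici]
            rw [div_le_iff₀ ht0] at h2
            nlinarith
          · intro h
            rw [mem_Ici] at h
            refine ⟨div_pos hc ht0, ?_⟩
            rw [div_le_iff₀ ht0]
            nlinarith
        by_cases hmem : t ∈ Ici (x/2)
        · rw [indicator_of_mem (hiff.mpr hmem), indicator_of_mem hmem]
          have hct : c / (c/t) = t := by field_simp
          rw [hct, show -(c/t) - t = -t - c/t by ring]
        · rw [indicator_of_notMem (fun hh => hmem (hiff.mp hh)),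
            indicator_of_notMem hmem]
          simp
      have hss : Ioi (0:ℝ) ∩ Ici (x/2) = Ici (x/2) :=
        inter_eq_self_of_subset_right (fun t ht => lt_of_lt_of_le hx2 ht)
      rw [setIntegral_congr_fun measurableSet_Ioi heq,
        setIntegral_indicator measurableSet_Ici, hss, integral_Ici_eq_integral_Ioi]
    exact hR.symm.trans (key.symm.trans hL)
  have hsplit : (∫ t in Ioi (0:ℝ), Real.exp (-t - c/t) / t)
      = (∫ t in Ioc (0:ℝ) (x/2), Real.exp (-t - c/t) / t)
        + ∫ t in Ioi (x/2), Real.exp (-t - c/t) / t := by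
    rw [← setIntegral_union (Ioc_disjoint_Ioi le_rfl) measurableSet_Ioi
      ((integrableOn_f c hc).mono_set (fun t ht => ht.1))
      ((integrableOn_f c hc).mono_set (Ioi_subset_Ioi hx2.le)),
      Ioc_union_Ioi_eq_Ioi hx2.le]
  rw [hsplit, hsym]; ring

lemma S_split (x : ℝ) (hx0 : 0 < x) (hx1 : x < 1) :
    (∫ t in Ioi (x/2), Real.exp (-t - (x^2/4)/t) / t)
      = (∫ t in Ioc (x/2) 1, Real.exp (-t - (x^2/4)/t) / t)
        + ∫ t in Ioi (1:ℝ), Real.exp (-t - (x^2/4)/t) / t := by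
  have hc : 0 < x^2/4 := by positivity
  have hx2 : 0 < x/2 := by positivity
  rw [← setIntegral_union (Ioc_disjoint_Ioi le_rfl) measurableSet_Ioi
    ((integrableOn_f _ hc).mono_set (fun t ht => lt_trans hx2 ht.1))
    ((integrableOn_f _ hc).mono_set (Ioi_subset_Ioi zero_le_one)),
    Ioc_union_Ioi_eq_Ioi (by linarith)]

lemma S_upper (x : ℝ) (hx0 : 0 < x) (hx1 : x < 1) :
    (∫ t in Ioi (x/2), Real.exp (-t - (x^2/4)/t) / t) ≤ -Real.log x + 2 := by
  have hc : 0 < x^2/4 := by positivity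
  have hx2 : 0 < x/2 := by positivity
  have hle : x/2 ≤ 1 := by linarith
  rw [S_split x hx0 hx1]
  have hinv : IntervalIntegrable (fun t : ℝ => t⁻¹) volume (x/2) 1 := by
    apply intervalIntegral.intervalIntegrable_inv
    · intro t ht
      rw [uIcc_of_le hle] at ht
      exact ne_of_gt (lt_of_lt_of_le hx2 ht.1)
    · exact continuousOn_id
  have hA : (∫ t in Ioc (x/2) 1, Real.exp (-t - (x^2/4)/t) / t)
      ≤ ∫ t in Ioc (x/2) 1, t⁻¹ := by
    refine setIntegral_mono_on
      ((integrableOn_f _ hc).mono_set (fun t ht => lt_trans hx2 ht.1))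
      ((intervalIntegrable_iff_integrableOn_Ioc_of_le hle).mp hinv)
      measurableSet_Ioc (fun t ht => ?_)
    have ht0 : (0:ℝ) < t := lt_trans hx2 ht.1
    have h1 : Real.exp (-t - (x^2/4)/t) ≤ 1 := by
      rw [← Real.exp_zero]
      apply Real.exp_le_exp.mpr
      have : 0 < (x^2/4)/t := div_pos hc ht0
      linarith
    rw [div_le_iff₀ ht0, inv_mul_cancel₀ ht0.ne']
    exact h1
  have hAval : (∫ t in Ioc (x/2) 1, (t:ℝ)⁻¹) = Real.log 2 - Real.log x := by
    rw [← intervalIntegral.integral_of_le hle, integral_inv_of_pos hx2 one_pos,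
      one_div, Real.log_inv, Real.log_div hx0.ne' two_ne_zero]
    ring
  have hB : (∫ t in Ioi (1:ℝ), Real.exp (-t - (x^2/4)/t) / t)
      ≤ ∫ t in Ioi (1:ℝ), Real.exp (-t) := by
    have hexp : IntegrableOn (fun t : ℝ => Real.exp (-t)) (Ioi 1) := by
      have := exp_neg_integrableOn_Ioi 1 one_pos
      simpa using this
    refine setIntegral_mono_on
      ((integrableOn_f _ hc).mono_set (Ioi_subset_Ioi zero_le_one))
      hexp measurableSet_Ioi (fun t ht => ?_)
    have ht1 : (1:ℝ) < t := ht
    have ht0 : (0:ℝ) < t := lt_trans one_pos ht1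
    have h1 : Real.exp (-t - (x^2/4)/t) ≤ Real.exp (-t) := by
      apply Real.exp_le_exp.mpr
      have : 0 < (x^2/4)/t := div_pos hc ht0
      linarith
    calc Real.exp (-t - (x^2/4)/t) / t ≤ Real.exp (-t - (x^2/4)/t) / 1 := by
          apply div_le_div_of_nonneg_left (Real.exp_pos _).le one_pos ht1.le
      _ = Real.exp (-t - (x^2/4)/t) := div_one _
      _ ≤ Real.exp (-t) := h1
  have hBval : (∫ t in Ioi (1:ℝ), Real.exp (-t)) = Real.exp (-1) :=
    integral_exp_neg_Ioi 1
  have hlog2 : Real.log 2 ≤ 1 := by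
    have := Real.log_le_sub_one_of_pos (by norm_num : (0:ℝ) < 2)
    linarith
  have hexp1 : Real.exp (-1) ≤ 1 := by
    rw [← Real.exp_zero]; exact Real.exp_le_exp.mpr (by norm_num)
  linarith [hA, hB, hAval ▸ hA, hBval ▸ hB]

lemma S_lower (x : ℝ) (hx0 : 0 < x) (hx1 : x < 1) :
    -Real.log x - 1 ≤ ∫ t in Ioi (x/2), Real.exp (-t - (x^2/4)/t) / t := by
  set c := x^2/4 with hcdef
  have hc : 0 < c := by positivity
  have hx2 : 0 < x/2 := by positivity
  have hle : x/2 ≤ 1 := by linarith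
  set ψ : ℝ → ℝ := fun t => t⁻¹ - 1 + c * -(t^2)⁻¹ with hψ
  have hψcont : ContinuousOn ψ (uIcc (x/2) 1) := by
    rw [uIcc_of_le hle]
    have hne : ∀ t ∈ Icc (x/2) 1, t ≠ 0 := fun t ht => ne_of_gt (lt_of_lt_of_le hx2 ht.1)
    apply ContinuousOn.add
    · exact (continuousOn_id.inv₀ hne).sub continuousOn_const
    · exact continuousOn_const.mul
        (((continuousOn_id.pow 2).inv₀ (fun t ht => pow_ne_zero 2 (hne t ht))).neg)
  have hψint : IntervalIntegrable ψ volume (x/2) 1 := hψcont.intervalIntegrable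
  have hderiv : ∀ t ∈ uIcc (x/2) 1,
      HasDerivAt (fun t : ℝ => Real.log t - t + c * t⁻¹) (ψ t) t := by
    intro t ht
    rw [uIcc_of_le hle] at ht
    have ht0 : (0:ℝ) < t := lt_of_lt_of_le hx2 ht.1
    exact ((Real.hasDerivAt_log ht0.ne').sub (hasDerivAt_id t)).add
      ((hasDerivAt_inv ht0.ne').const_mul c)
  have hval : (∫ t in (x/2)..1, ψ t)
      = (Real.log 1 - 1 + c * 1⁻¹) - (Real.log (x/2) - x/2 + c * (x/2)⁻¹) :=
    intervalIntegral.integral_eq_sub_of_hasDerivAt hderiv hψint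
  have hvalsimp : (∫ t in (x/2)..1, ψ t) = -Real.log x + Real.log 2 - 1 + c + x/2 - 2*c/x := by
    rw [hval, Real.log_one, Real.log_div hx0.ne' two_ne_zero]
    have : (x/2)⁻¹ = 2/x := by field_simp
    rw [this]
    field_simp
    ring
  have hA : (∫ t in Ioc (x/2) 1, ψ t) ≤ ∫ t in Ioc (x/2) 1, Real.exp (-t - c/t) / t := by
    refine setIntegral_mono_on
      ((intervalIntegrable_iff_integrableOn_Ioc_of_le hle).mp hψint)
      ((integrableOn_f _ hc).mono_set (fun t ht => lt_trans hx2 ht.1))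
      measurableSet_Ioc (fun t ht => ?_)
    have ht0 : (0:ℝ) < t := lt_trans hx2 ht.1
    have h1 : -t - c/t + 1 ≤ Real.exp (-t - c/t) := Real.add_one_le_exp _
    have h2 : ψ t = (1 - t - c/t) / t := by
      rw [hψ]
      field_simp
      ring
    rw [h2]
    gcongr
    linarith
  have hB : 0 ≤ ∫ t in Ioi (1:ℝ), Real.exp (-t - c/t) / t :=
    setIntegral_nonneg measurableSet_Ioi
      (fun t ht => div_nonneg (Real.exp_pos _).le (by linarith [mem_Ioi.mp ht]))
  rw [S_split x hx0 hx1]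
  have hIoc : (∫ t in Ioc (x/2) 1, ψ t) = ∫ t in (x/2)..1, ψ t :=
    (intervalIntegral.integral_of_le hle).symm
  have hcx : 2*c/x = x/2 := by rw [hcdef]; field_simp; ring
  have hlog2 : 0 ≤ Real.log 2 := Real.log_nonneg (by norm_num)
  have : -Real.log x - 1 ≤ ∫ t in Ioc (x/2) 1, Real.exp (-t - c/t) / t := by
    calc -Real.log x - 1 ≤ -Real.log x + Real.log 2 - 1 + c + x/2 - 2*c/x := by
          rw [hcx]; linarith
      _ = ∫ t in Ioc (x/2) 1, ψ t := by rw [hIoc, hvalsimp]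
      _ ≤ _ := hA
  linarith


lemma bessel_one_eq (x : ℝ) :
    besselKernel 1 x
      = (1/(2*Real.pi)) * ∫ t in Ioi (0:ℝ), Real.exp (-t - (x^2/4)/t) / t := by
  unfold besselKernel
  have hΓ : Real.Gamma ((1:ℝ)/2) = Real.sqrt Real.pi := Real.Gamma_one_half_eq
  rw [hΓ]
  have hcoef : (1:ℝ) / (2 * Real.sqrt Real.pi * Real.sqrt Real.pi) = 1/(2*Real.pi) := by
    rw [mul_assoc, Real.mul_self_sqrt Real.pi_pos.le]
  rw [hcoef]
  congr 1
  refine setIntegral_congr_fun measurableSet_Ioi (fun t ht => ?_)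
  have ht0 : (0:ℝ) < t := ht
  rw [show ((1:ℝ) - 3)/2 = (-1:ℝ) by norm_num, Real.rpow_neg_one, ← div_eq_mul_inv,
    ← div_div]

/-- for `s = 1` the Bessel kernel has a logarithmic singularity at the origin:
`K_1(x) / log(1/x) → 1/π` as `x → 0⁺`. -/
theorem besselKernel_log_singularity :
    Tendsto (fun x : ℝ => besselKernel 1 x / Real.log (1 / x))
      (nhdsWithin 0 (Set.Ioi (0 : ℝ))) (nhds (1 / Real.pi)) := by
  have hπ : (0:ℝ) < Real.pi := Real.pi_pos
  set L : ℝ → ℝ := fun x => -Real.log x with hL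
  set S : ℝ → ℝ := fun x => ∫ t in Ioi (x/2), Real.exp (-t - (x^2/4)/t) / t with hS
  have hev : Ioo (0:ℝ) 1 ∈ nhdsWithin (0:ℝ) (Set.Ioi (0:ℝ)) :=
    Ioo_mem_nhdsGT_of_mem (by constructor <;> norm_num)
  have hLpos : ∀ x ∈ Ioo (0:ℝ) 1, 0 < L x := by
    intro x hx
    simp only [hL]
    exact neg_pos.mpr (Real.log_neg hx.1 hx.2)
  have hkey : ∀ x ∈ Ioo (0:ℝ) 1,
      besselKernel 1 x / Real.log (1/x) = S x / (Real.pi * L x) := by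
    intro x hx
    have hfold : (∫ t in Ioi (x/2), Real.exp (-t - (x^2/4)/t) / t) = S x := rfl
    rw [bessel_one_eq, integral_eq_two_half x hx.1, hfold,
      show Real.log (1/x) = -Real.log x by rw [one_div, Real.log_inv]]
    have hLx : Real.log x ≠ 0 := (Real.log_neg hx.1 hx.2).ne
    have hLeq : L x = -Real.log x := rfl
    rw [hLeq]
    field_simp
  -- limit of comparison functions
  have hLtop : Tendsto L (nhdsWithin (0:ℝ) (Set.Ioi 0)) atTop :=
    tendsto_neg_atBot_atTop.comp Real.tendsto_log_nhdsGT_zero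
  have hinv : Tendsto (fun x => (L x)⁻¹) (nhdsWithin (0:ℝ) (Set.Ioi 0)) (nhds 0) :=
    hLtop.inv_tendsto_atTop
  have hlo : Tendsto (fun x => 1/Real.pi - (1/Real.pi) * (L x)⁻¹)
      (nhdsWithin (0:ℝ) (Set.Ioi 0)) (nhds (1/Real.pi)) := by
    have h1 : Tendsto (fun x => (1/Real.pi) * (L x)⁻¹)
        (nhdsWithin (0:ℝ) (Set.Ioi 0)) (nhds ((1/Real.pi) * 0)) := hinv.const_mul _
    have := (tendsto_const_nhds (x := (1:ℝ)/Real.pi)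
      (f := nhdsWithin (0:ℝ) (Set.Ioi 0))).sub h1
    simpa using this
  have hhi : Tendsto (fun x => 1/Real.pi + (2/Real.pi) * (L x)⁻¹)
      (nhdsWithin (0:ℝ) (Set.Ioi 0)) (nhds (1/Real.pi)) := by
    have h1 : Tendsto (fun x => (2/Real.pi) * (L x)⁻¹)
        (nhdsWithin (0:ℝ) (Set.Ioi 0)) (nhds ((2/Real.pi) * 0)) := hinv.const_mul _
    have := (tendsto_const_nhds (x := (1:ℝ)/Real.pi)
      (f := nhdsWithin (0:ℝ) (Set.Ioi 0))).add h1
    simpa using this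
  refine tendsto_of_tendsto_of_tendsto_of_le_of_le' hlo hhi ?_ ?_
  · filter_upwards [hev] with x hx
    rw [hkey x hx]
    have hLx := hLpos x hx
    have hlow := S_lower x hx.1 hx.2
    have heq : 1/Real.pi - (1/Real.pi) * (L x)⁻¹ = (L x - 1) / (Real.pi * L x) := by
      field_simp [hLx.ne']
    rw [heq]
    refine (div_le_div_iff_of_pos_right (by positivity)).mpr ?_
    simpa [hL, hS] using hlow
  · filter_upwards [hev] with x hx
    rw [hkey x hx]
    have hLx := hLpos x hx
    have hupp := S_upper x hx.1 hx.2
    have heq : 1/Real.pi + (2/Real.pi) * (L x)⁻¹ = (L x + 2) / (Real.pi * L x) := by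
      field_simp [hLx.ne']
    rw [heq]
    refine (div_le_div_iff_of_pos_right (by positivity)).mpr ?_
    simpa [hL, hS] using hupp
end

section
/- Let s > 0, μ ∈ ℝ, and let φ : ℝ → ℝ be a bounded continuous solution of the steady fKdV equation with speed μ satisfying φ(x) ≤ μ/2 for all x. Then for all x, y ∈ ℝ, (φ(x) − φ(y))² ≤ |(K_s ∗ φ)(x) − (K_s ∗ φ)(y)|. -/
open Real MeasureTheory Set Filter

/-- a priori Hölder-type estimate — for a bounded continuous steady solution
with `φ ≤ μ/2`, `(φ(x) - φ(y))² ≤ |(K_s ∗ φ)(x) - (K_s ∗ φ)(y)|`. -/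
theorem steady_square_difference_estimate (s : ℝ) (hs : 0 < s) (μ : ℝ)
    (φ : ℝ → ℝ) (hcont : Continuous φ) (hbdd : ∃ M : ℝ, ∀ x : ℝ, |φ x| ≤ M)
    (hsol : ∀ x : ℝ, -μ * φ x + φ x ^ 2 + convBessel s φ x = 0)
    (hle : ∀ x : ℝ, φ x ≤ μ / 2) :
    ∀ x y : ℝ, (φ x - φ y) ^ 2 ≤ |convBessel s φ x - convBessel s φ y| := by
  intro x y
  have hx := hsol x
  have hy := hsol y
  have ax : 0 ≤ μ / 2 - φ x := by linarith [hle x]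
  have ay : 0 ≤ μ / 2 - φ y := by linarith [hle y]
  have key : convBessel s φ x - convBessel s φ y =
      (μ / 2 - φ y) ^ 2 - (μ / 2 - φ x) ^ 2 := by nlinarith [hx, hy]
  rw [key]
  rcases le_total (μ / 2 - φ x) (μ / 2 - φ y) with h | h
  · rw [abs_of_nonneg (by nlinarith)]
    nlinarith
  · rw [abs_of_nonpos (by nlinarith)]
    nlinarith
end

section
/- Let s > 0, μ > 1, and let Φ : ℝ → ℝ be a bounded continuous solution of the steady fKdV equation with speed μ that is not identically zero and satisfies lim_{x→±∞} Φ(x) = 0. Then there exists δ > 0 such that the function x ↦ e^{δ|x|} · Φ(x) belongs to L¹(ℝ) ∩ L^∞(ℝ); in particular, Φ decays exponentially as |x| → ∞. -/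
open Real MeasureTheory Set Filter
open scoped ENNReal NNReal

namespace SolitaryAux


noncomputable def cst (s : ℝ) : ℝ := 1 / (2 * Real.sqrt Real.pi * Real.Gamma (s / 2))

noncomputable def G (s x t : ℝ) : ℝ := Real.exp (-t - x ^ 2 / (4 * t)) * t ^ ((s - 3) / 2)

lemma cst_pos {s : ℝ} (hs : 0 < s) : 0 < cst s := by
  have h1 := Real.Gamma_pos_of_pos (half_pos hs)
  have h2 := Real.sqrt_pos.2 Real.pi_pos
  unfold cst; positivity

lemma measurable_G (s : ℝ) : Measurable (fun q : ℝ × ℝ => G s q.1 q.2) := by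
  apply Measurable.mul
  · exact (measurable_snd.neg.sub
      ((measurable_fst.pow measurable_const).div (measurable_const.mul measurable_snd))).exp
  · exact measurable_snd.pow measurable_const

lemma G_nonneg {s x t : ℝ} (ht : 0 < t) : 0 ≤ G s x t :=
  mul_nonneg (Real.exp_pos _).le (Real.rpow_nonneg ht.le _)

noncomputable def L (s x : ℝ) : ℝ≥0∞ := ∫⁻ t in Set.Ioi (0:ℝ), ENNReal.ofReal (G s x t)

lemma measurable_L (s : ℝ) : Measurable (L s) :=
  Measurable.lintegral_prod_right (f := fun x t => ENNReal.ofReal (G s x t)) ((measurable_G s).ennreal_ofReal)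

lemma kernel_eq (s x : ℝ) : besselKernel s x = cst s * (L s x).toReal := by
  unfold besselKernel cst L
  show _ * (∫ t in Set.Ioi (0:ℝ), G s x t) = _
  congr 1
  have hnn : 0 ≤ᵐ[volume.restrict (Set.Ioi (0:ℝ))] fun t => G s x t :=
    (ae_restrict_iff' measurableSet_Ioi).2 (ae_of_all _ fun t ht => G_nonneg ht)
  have hmeas : AEStronglyMeasurable (fun t => G s x t) (volume.restrict (Set.Ioi (0:ℝ))) :=
    ((measurable_G s).comp (measurable_const.prodMk measurable_id)).aestronglyMeasurable
  by_cases hint : IntegrableOn (fun t => G s x t) (Set.Ioi (0:ℝ)) volume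
  · exact integral_eq_lintegral_of_nonneg_ae hnn hmeas
  · rw [integral_undef hint]
    have : ∫⁻ t in Set.Ioi (0:ℝ), ENNReal.ofReal (G s x t) = ⊤ := by
      by_contra h
      exact hint ⟨hmeas, (hasFiniteIntegral_iff_ofReal hnn).2 (lt_top_iff_ne_top.2 h)⟩
    rw [this, ENNReal.toReal_top]

lemma kernel_nonneg {s : ℝ} (hs : 0 < s) (x : ℝ) : 0 ≤ besselKernel s x := by
  rw [kernel_eq]; exact mul_nonneg (cst_pos hs).le ENNReal.toReal_nonneg

lemma measurable_kernel (s : ℝ) : Measurable (besselKernel s) := by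
  have : besselKernel s = fun x => cst s * (L s x).toReal := funext fun x => kernel_eq s x
  rw [this]
  exact ((measurable_L s).ennreal_toReal).const_mul _


lemma weight_pointwise {δ t x : ℝ} (ht : 0 < t) (hδ0 : 0 ≤ δ) (hδ : δ ≤ 1/2) :
    Real.exp (δ * |x|) * (Real.exp (-(x^2 / (4*t))) * Real.exp (-t)) ≤
      Real.exp (-(x^2/(4*t))) * Real.exp (-t)
        + δ * (4 * Real.sqrt t) * Real.exp (-(t/2)) * Real.exp (-(x^2/(16*t))) := by
  set u := |x| with hu
  have hu0 : 0 ≤ u := abs_nonneg x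
  have hx2 : u^2 = x^2 := sq_abs x
  have e1 : Real.exp (δ*u) ≤ 1 + (δ*u) * Real.exp (δ*u) := by
    have h := Real.add_one_le_exp (-(δ*u))
    have h2 := mul_le_mul_of_nonneg_left h (Real.exp_pos (δ*u)).le
    rw [← Real.exp_add, add_neg_cancel, Real.exp_zero] at h2
    nlinarith [Real.exp_pos (δ*u)]
  have e2 : Real.exp (δ*u) ≤ Real.exp (2*δ^2*t) * Real.exp (x^2/(8*t)) := by
    rw [← Real.exp_add]
    apply Real.exp_le_exp.2
    have h8 : (0:ℝ) < 8*t := by linarith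
    have h1 : (δ*u - 2*δ^2*t) * (8*t) ≤ x^2 := by nlinarith [sq_nonneg (4*δ*t - u)]
    have h2 : δ*u - 2*δ^2*t ≤ x^2/(8*t) := (le_div_iff₀ h8).2 h1
    linarith
  have e3 : u ≤ 4 * Real.sqrt t * Real.exp (x^2/(16*t)) := by
    set r := Real.sqrt t with hr
    have hr0 : 0 < r := Real.sqrt_pos.2 ht
    have hr2 : r^2 = t := Real.sq_sqrt ht.le
    set v := u / (4*r) with hv
    have hv0 : 0 ≤ v := div_nonneg hu0 (by linarith)
    have hvexp : v ≤ Real.exp (v^2) := by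
      rcases le_total v 1 with h|h
      · have : (1:ℝ) ≤ Real.exp (v^2) := by
          have := Real.add_one_le_exp (v^2); nlinarith [sq_nonneg v]
        linarith
      · have h2 : v ≤ v^2 := by nlinarith
        have := Real.add_one_le_exp (v^2)
        linarith
    have hveq : v^2 = x^2/(16*t) := by
      rw [hv, div_pow, hx2, ← hr2]; ring_nf
    have hueq : u = 4*r*v := by rw [hv]; field_simp
    calc u = 4*r*v := hueq
      _ ≤ 4*r*Real.exp (v^2) := by nlinarith
      _ = 4 * Real.sqrt t * Real.exp (x^2/(16*t)) := by rw [hveq, hr]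
  have e4 : Real.exp (2*δ^2*t) * Real.exp (-t) ≤ Real.exp (-(t/2)) := by
    rw [← Real.exp_add]
    apply Real.exp_le_exp.2
    have hδ2 : δ^2 ≤ 1/4 := by nlinarith
    nlinarith [mul_nonneg ht.le (by nlinarith : (0:ℝ) ≤ 1/4 - δ^2)]
  have hxe1 : Real.exp (x^2/(8*t)) * Real.exp (-(x^2/(4*t))) = Real.exp (-(x^2/(8*t))) := by
    rw [← Real.exp_add]; congr 1; field_simp; ring
  have hxe2 : Real.exp (x^2/(16*t)) * Real.exp (-(x^2/(8*t))) = Real.exp (-(x^2/(16*t))) := by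
    rw [← Real.exp_add]; congr 1; field_simp; ring
  have step1 : Real.exp (δ*u) * (Real.exp (-(x^2/(4*t))) * Real.exp (-t)) ≤
      Real.exp (-(x^2/(4*t))) * Real.exp (-t)
        + (δ*u) * (Real.exp (δ*u) * Real.exp (-(x^2/(4*t)))) * Real.exp (-t) := by
    nlinarith [Real.exp_pos (-(x^2/(4*t))), Real.exp_pos (-t),
      mul_le_mul_of_nonneg_right e1 (mul_nonneg (Real.exp_pos (-(x^2/(4*t)))).le (Real.exp_pos (-t)).le)]
  have step2 : (δ*u) * (Real.exp (δ*u) * Real.exp (-(x^2/(4*t)))) * Real.exp (-t) ≤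
      (δ*u) * (Real.exp (2*δ^2*t) * Real.exp (-(x^2/(8*t)))) * Real.exp (-t) := by
    have h := mul_le_mul_of_nonneg_right e2 (Real.exp_pos (-(x^2/(4*t)))).le
    rw [mul_assoc (Real.exp (2*δ^2*t)), hxe1] at h
    have hδu : 0 ≤ δ*u := mul_nonneg hδ0 hu0
    exact mul_le_mul_of_nonneg_right (mul_le_mul_of_nonneg_left h hδu) (Real.exp_pos _).le
  have step3 : (δ*u) * (Real.exp (2*δ^2*t) * Real.exp (-(x^2/(8*t)))) * Real.exp (-t) ≤
      δ * (4 * Real.sqrt t) * Real.exp (-(t/2)) * Real.exp (-(x^2/(16*t))) := by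
    have h1 : (δ*u) * (Real.exp (2*δ^2*t) * Real.exp (-t)) ≤ (δ*u) * Real.exp (-(t/2)) :=
      mul_le_mul_of_nonneg_left e4 (mul_nonneg hδ0 hu0)
    have h2 : (δ*u) * Real.exp (-(t/2)) * Real.exp (-(x^2/(8*t))) ≤
        δ * (4 * Real.sqrt t * Real.exp (x^2/(16*t))) * Real.exp (-(t/2)) * Real.exp (-(x^2/(8*t))) := by
      have := mul_le_mul_of_nonneg_left e3 hδ0
      have hp : (0:ℝ) < Real.exp (-(t/2)) * Real.exp (-(x^2/(8*t))) :=
        mul_pos (Real.exp_pos _) (Real.exp_pos _)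
      nlinarith
    have h3 : δ * (4 * Real.sqrt t * Real.exp (x^2/(16*t))) * Real.exp (-(t/2)) * Real.exp (-(x^2/(8*t)))
        = δ * (4 * Real.sqrt t) * Real.exp (-(t/2)) * Real.exp (-(x^2/(16*t))) := by
      rw [← hxe2]; ring
    calc (δ*u) * (Real.exp (2*δ^2*t) * Real.exp (-(x^2/(8*t)))) * Real.exp (-t)
        = ((δ*u) * (Real.exp (2*δ^2*t) * Real.exp (-t))) * Real.exp (-(x^2/(8*t))) := by ring
      _ ≤ ((δ*u) * Real.exp (-(t/2))) * Real.exp (-(x^2/(8*t))) :=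
          mul_le_mul_of_nonneg_right h1 (Real.exp_pos _).le
      _ ≤ δ * (4 * Real.sqrt t * Real.exp (x^2/(16*t))) * Real.exp (-(t/2)) * Real.exp (-(x^2/(8*t))) := h2
      _ = _ := h3
  calc Real.exp (δ*u) * (Real.exp (-(x^2/(4*t))) * Real.exp (-t))
      ≤ Real.exp (-(x^2/(4*t))) * Real.exp (-t)
        + (δ*u) * (Real.exp (δ*u) * Real.exp (-(x^2/(4*t)))) * Real.exp (-t) := step1
    _ ≤ Real.exp (-(x^2/(4*t))) * Real.exp (-t)
        + (δ*u) * (Real.exp (2*δ^2*t) * Real.exp (-(x^2/(8*t)))) * Real.exp (-t) := by linarith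
    _ ≤ _ := by linarith

lemma sqrt_four : Real.sqrt 4 = 2 := by
  rw [show (4:ℝ) = 2^2 by norm_num, Real.sqrt_sq (by norm_num : (0:ℝ) ≤ 2)]

lemma lint_x {s : ℝ} (hs : 0 < s) {δ : ℝ} (hδ0 : 0 ≤ δ) (hδ : δ ≤ 1/2) {t : ℝ} (ht : 0 < t) :
    ∫⁻ x : ℝ, ENNReal.ofReal (Real.exp (δ * |x|) * cst s * G s x t) ≤
      ENNReal.ofReal ((cst s * (2 * Real.sqrt Real.pi)) * (Real.exp (-t) * t ^ (s/2 - 1))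
        + δ * ((cst s * (16 * Real.sqrt Real.pi)) * (t ^ ((s-1)/2) * Real.exp (-(2⁻¹ * t))))) := by
  have hc : 0 < cst s := cst_pos hs
  set k : ℝ := cst s * t ^ ((s-3)/2) with hk
  have hk0 : 0 ≤ k := mul_nonneg hc.le (Real.rpow_nonneg ht.le _)
  set c1 : ℝ := k * Real.exp (-t) with hc1
  set c2 : ℝ := k * (δ * (4 * Real.sqrt t)) * Real.exp (-(t/2)) with hc2
  have hc10 : 0 ≤ c1 := mul_nonneg hk0 (Real.exp_pos _).le
  have hc20 : 0 ≤ c2 := by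
    apply mul_nonneg (mul_nonneg hk0 _) (Real.exp_pos _).le
    exact mul_nonneg hδ0 (by positivity)
  set f1 : ℝ → ℝ := fun x => c1 * Real.exp (-(4*t)⁻¹ * x^2) with hf1
  set f2 : ℝ → ℝ := fun x => c2 * Real.exp (-(16*t)⁻¹ * x^2) with hf2
  have hb4 : (0:ℝ) < (4*t)⁻¹ := by positivity
  have hb16 : (0:ℝ) < (16*t)⁻¹ := by positivity
  have hint1 : Integrable f1 := (integrable_exp_neg_mul_sq hb4).const_mul c1
  have hint2 : Integrable f2 := (integrable_exp_neg_mul_sq hb16).const_mul c2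
  have hpt : ∀ x : ℝ, Real.exp (δ * |x|) * cst s * G s x t ≤ f1 x + f2 x := by
    intro x
    have hsplit : Real.exp (-t - x^2/(4*t)) = Real.exp (-(x^2/(4*t))) * Real.exp (-t) := by
      rw [← Real.exp_add]; ring_nf
    have hW := weight_pointwise (δ := δ) (x := x) ht hδ0 hδ
    have hWk := mul_le_mul_of_nonneg_left hW hk0
    have he4 : Real.exp (-(x^2/(4*t))) = Real.exp (-(4*t)⁻¹ * x^2) := by congr 1; ring
    have he16 : Real.exp (-(x^2/(16*t))) = Real.exp (-(16*t)⁻¹ * x^2) := by congr 1; ring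
    calc Real.exp (δ * |x|) * cst s * G s x t
        = k * (Real.exp (δ*|x|) * (Real.exp (-(x^2/(4*t))) * Real.exp (-t))) := by
          rw [hk]; unfold G; rw [hsplit]; ring
      _ ≤ k * (Real.exp (-(x^2/(4*t))) * Real.exp (-t)
            + δ * (4 * Real.sqrt t) * Real.exp (-(t/2)) * Real.exp (-(x^2/(16*t)))) := hWk
      _ = f1 x + f2 x := by simp only [hf1, hf2]; rw [← he4, ← he16, hc1, hc2]; ring
  have hmono : ∫⁻ x : ℝ, ENNReal.ofReal (Real.exp (δ * |x|) * cst s * G s x t) ≤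
      ∫⁻ x : ℝ, (ENNReal.ofReal (f1 x) + ENNReal.ofReal (f2 x)) := by
    apply lintegral_mono
    intro x
    exact le_trans (ENNReal.ofReal_le_ofReal (hpt x)) ENNReal.ofReal_add_le
  have hmeas1 : Measurable fun x : ℝ => ENNReal.ofReal (f1 x) := by
    apply Measurable.ennreal_ofReal
    exact (((measurable_id.pow measurable_const).const_mul _).exp).const_mul c1
  have hadd : ∫⁻ x : ℝ, (ENNReal.ofReal (f1 x) + ENNReal.ofReal (f2 x)) =
      (∫⁻ x : ℝ, ENNReal.ofReal (f1 x)) + ∫⁻ x : ℝ, ENNReal.ofReal (f2 x) :=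
    lintegral_add_left hmeas1 _
  have hg1 : ∫⁻ x : ℝ, ENNReal.ofReal (f1 x) = ENNReal.ofReal (c1 * Real.sqrt (π / (4*t)⁻¹)) := by
    rw [← ofReal_integral_eq_lintegral_ofReal hint1
      (ae_of_all _ fun x => mul_nonneg hc10 (Real.exp_pos _).le)]
    simp only [hf1]
    rw [MeasureTheory.integral_const_mul, integral_gaussian]
  have hg2 : ∫⁻ x : ℝ, ENNReal.ofReal (f2 x) = ENNReal.ofReal (c2 * Real.sqrt (π / (16*t)⁻¹)) := by
    rw [← ofReal_integral_eq_lintegral_ofReal hint2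
      (ae_of_all _ fun x => mul_nonneg hc20 (Real.exp_pos _).le)]
    simp only [hf2]
    rw [MeasureTheory.integral_const_mul, integral_gaussian]
  -- algebraic identification
  have hsq4 : Real.sqrt (π / (4*t)⁻¹) = 2 * Real.sqrt π * Real.sqrt t := by
    rw [div_eq_mul_inv, inv_inv, Real.sqrt_mul Real.pi_pos.le, Real.sqrt_mul (by norm_num : (0:ℝ) ≤ 4), sqrt_four]
    ring
  have hsq16 : Real.sqrt (π / (16*t)⁻¹) = 4 * Real.sqrt π * Real.sqrt t := by
    rw [div_eq_mul_inv, inv_inv, Real.sqrt_mul Real.pi_pos.le, Real.sqrt_mul (by norm_num : (0:ℝ) ≤ 16),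
      show Real.sqrt 16 = 4 by
        rw [show (16:ℝ) = 4^2 by norm_num, Real.sqrt_sq (by norm_num : (0:ℝ) ≤ 4)]]
    ring
  have hE1 : c1 * Real.sqrt (π / (4*t)⁻¹) =
      (cst s * (2 * Real.sqrt Real.pi)) * (Real.exp (-t) * t ^ (s/2 - 1)) := by
    rw [hsq4, hc1, hk]
    have ht12 : t ^ ((s-3)/2) * Real.sqrt t = t ^ (s/2 - 1) := by
      rw [Real.sqrt_eq_rpow, ← Real.rpow_add ht]
      norm_num
      ring_nf
    calc cst s * t ^ ((s-3)/2) * Real.exp (-t) * (2 * Real.sqrt π * Real.sqrt t)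
        = cst s * (2 * Real.sqrt π) * (Real.exp (-t) * (t ^ ((s-3)/2) * Real.sqrt t)) := by ring
      _ = _ := by rw [ht12]
  have hE2 : c2 * Real.sqrt (π / (16*t)⁻¹) =
      δ * ((cst s * (16 * Real.sqrt Real.pi)) * (t ^ ((s-1)/2) * Real.exp (-(2⁻¹ * t)))) := by
    rw [hsq16, hc2, hk]
    have htt : Real.sqrt t * Real.sqrt t = t := Real.mul_self_sqrt ht.le
    have ht1 : t ^ ((s-3)/2) * t = t ^ ((s-1)/2) := by
      have h := Real.rpow_add ht ((s-3)/2) 1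
      rw [Real.rpow_one] at h
      rw [← h, show (s-3)/2 + 1 = (s-1)/2 by ring]
    have hexp2 : Real.exp (-(t/2)) = Real.exp (-(2⁻¹ * t)) := by congr 1; ring
    calc cst s * t ^ ((s-3)/2) * (δ * (4 * Real.sqrt t)) * Real.exp (-(t/2)) *
          (4 * Real.sqrt π * Real.sqrt t)
        = δ * ((cst s * (16 * Real.sqrt π)) *
            ((t ^ ((s-3)/2) * (Real.sqrt t * Real.sqrt t)) * Real.exp (-(t/2)))) := by ring
      _ = _ := by rw [htt, ht1, hexp2]
  have hA0 : 0 ≤ (cst s * (2 * Real.sqrt Real.pi)) * (Real.exp (-t) * t ^ (s/2 - 1)) := by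
    apply mul_nonneg (mul_nonneg hc.le (by positivity))
    exact mul_nonneg (Real.exp_pos _).le (Real.rpow_nonneg ht.le _)
  calc ∫⁻ x : ℝ, ENNReal.ofReal (Real.exp (δ * |x|) * cst s * G s x t)
      ≤ ∫⁻ x : ℝ, (ENNReal.ofReal (f1 x) + ENNReal.ofReal (f2 x)) := hmono
    _ = (∫⁻ x : ℝ, ENNReal.ofReal (f1 x)) + ∫⁻ x : ℝ, ENNReal.ofReal (f2 x) := hadd
    _ = ENNReal.ofReal ((cst s * (2 * Real.sqrt Real.pi)) * (Real.exp (-t) * t ^ (s/2 - 1)))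
        + ENNReal.ofReal (δ * ((cst s * (16 * Real.sqrt Real.pi)) * (t ^ ((s-1)/2) * Real.exp (-(2⁻¹ * t))))) := by
        rw [hg1, hg2, hE1, hE2]
    _ = _ := (ENNReal.ofReal_add hA0 (by
        apply mul_nonneg hδ0
        apply mul_nonneg (mul_nonneg hc.le (by positivity))
        exact mul_nonneg (Real.rpow_nonneg ht.le _) (Real.exp_pos _).le)).symm
noncomputable def Ccap (s : ℝ) : ℝ := ∫ t in Set.Ioi (0:ℝ), t ^ ((s-1)/2) * Real.exp (-(2⁻¹ * t))
noncomputable def Bconst (s : ℝ) : ℝ := cst s * (16 * Real.sqrt Real.pi) * Ccap s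

lemma Ccap_integrableOn {s : ℝ} (hs : 0 < s) :
    IntegrableOn (fun t : ℝ => t ^ ((s-1)/2) * Real.exp (-(2⁻¹ * t))) (Set.Ioi 0) := by
  have h := integrableOn_rpow_mul_exp_neg_mul_rpow (s := (s-1)/2) (p := 1) (b := 2⁻¹)
      (by linarith : (-1:ℝ) < (s-1)/2) (by norm_num) (by norm_num)
  apply h.congr_fun ?_ measurableSet_Ioi
  intro x hx
  simp only [Real.rpow_one, neg_mul]

lemma Ccap_nonneg (s : ℝ) : 0 ≤ Ccap s :=
  setIntegral_nonneg measurableSet_Ioi fun t ht =>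
    mul_nonneg (Real.rpow_nonneg (le_of_lt ht) _) (Real.exp_pos _).le

lemma Bconst_nonneg {s : ℝ} (hs : 0 < s) : 0 ≤ Bconst s := by
  have h2 := Real.sqrt_nonneg Real.pi
  exact mul_nonneg (mul_nonneg (cst_pos hs).le (by positivity)) (Ccap_nonneg s)

lemma weighted_le {s : ℝ} (hs : 0 < s) {δ : ℝ} (hδ0 : 0 ≤ δ) (hδ : δ ≤ 1/2) :
    ∫⁻ x : ℝ, ENNReal.ofReal (Real.exp (δ * |x|) * besselKernel s x) ≤
      ENNReal.ofReal (1 + δ * Bconst s) := by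
  have hc := cst_pos hs
  have hpt : ∀ x : ℝ, ENNReal.ofReal (Real.exp (δ * |x|) * besselKernel s x) ≤
      ∫⁻ t in Set.Ioi (0:ℝ), ENNReal.ofReal (Real.exp (δ * |x|) * cst s * G s x t) := by
    intro x
    rw [kernel_eq]
    have hec : 0 ≤ Real.exp (δ*|x|) * cst s := mul_nonneg (Real.exp_pos _).le hc.le
    have h1 : ENNReal.ofReal (Real.exp (δ*|x|) * (cst s * (L s x).toReal)) =
        ENNReal.ofReal (Real.exp (δ*|x|) * cst s) * ENNReal.ofReal ((L s x).toReal) := by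
      rw [← ENNReal.ofReal_mul hec, mul_assoc]
    calc ENNReal.ofReal (Real.exp (δ*|x|) * (cst s * (L s x).toReal))
        = ENNReal.ofReal (Real.exp (δ*|x|) * cst s) * ENNReal.ofReal ((L s x).toReal) := h1
      _ ≤ ENNReal.ofReal (Real.exp (δ*|x|) * cst s) * L s x :=
          mul_le_mul_right ENNReal.ofReal_toReal_le _
      _ = ∫⁻ t in Set.Ioi (0:ℝ),
            ENNReal.ofReal (Real.exp (δ*|x|) * cst s) * ENNReal.ofReal (G s x t) :=
          (lintegral_const_mul' _ _ ENNReal.ofReal_ne_top).symm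
      _ = ∫⁻ t in Set.Ioi (0:ℝ), ENNReal.ofReal (Real.exp (δ * |x|) * cst s * G s x t) := by
          congr 1; funext t; rw [ENNReal.ofReal_mul hec]
  have hmeasprod : Measurable (fun z : ℝ × ℝ =>
      ENNReal.ofReal (Real.exp (δ * |z.1|) * cst s * G s z.1 z.2)) := by
    apply Measurable.ennreal_ofReal
    exact ((measurable_fst.abs.const_mul δ).exp.mul_const (cst s)).mul (measurable_G s)
  have hswap : ∫⁻ x : ℝ, ∫⁻ t in Set.Ioi (0:ℝ),
        ENNReal.ofReal (Real.exp (δ * |x|) * cst s * G s x t) =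
      ∫⁻ t in Set.Ioi (0:ℝ), ∫⁻ x : ℝ,
        ENNReal.ofReal (Real.exp (δ * |x|) * cst s * G s x t) :=
    lintegral_lintegral_swap hmeasprod.aemeasurable
  set A : ℝ → ℝ := fun t => (cst s * (2 * Real.sqrt Real.pi)) * (Real.exp (-t) * t ^ (s/2 - 1))
    with hA
  set B : ℝ → ℝ := fun t =>
      δ * ((cst s * (16 * Real.sqrt Real.pi)) * (t ^ ((s-1)/2) * Real.exp (-(2⁻¹ * t)))) with hB
  have hstep3 : ∫⁻ t in Set.Ioi (0:ℝ), ∫⁻ x : ℝ,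
        ENNReal.ofReal (Real.exp (δ * |x|) * cst s * G s x t) ≤
      ∫⁻ t in Set.Ioi (0:ℝ), ENNReal.ofReal (A t + B t) := by
    apply lintegral_mono_ae
    refine (ae_restrict_iff' measurableSet_Ioi).2 (ae_of_all _ fun t ht => ?_)
    exact lint_x hs hδ0 hδ ht
  have hmeasA : Measurable fun t : ℝ => ENNReal.ofReal (A t) := by
    apply Measurable.ennreal_ofReal
    exact ((measurable_id.neg.exp).mul (measurable_id.pow measurable_const)).const_mul _
  have hsplit : ∫⁻ t in Set.Ioi (0:ℝ), ENNReal.ofReal (A t + B t) ≤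
      (∫⁻ t in Set.Ioi (0:ℝ), ENNReal.ofReal (A t)) +
        ∫⁻ t in Set.Ioi (0:ℝ), ENNReal.ofReal (B t) := by
    refine le_trans (lintegral_mono fun t => ENNReal.ofReal_add_le) ?_
    rw [lintegral_add_left hmeasA]
  have hGammaInt : IntegrableOn (fun t : ℝ => Real.exp (-t) * t ^ (s/2 - 1)) (Set.Ioi 0) :=
    Real.GammaIntegral_convergent (half_pos hs)
  have hIA : ∫⁻ t in Set.Ioi (0:ℝ), ENNReal.ofReal (A t) = ENNReal.ofReal 1 := by
    rw [← ofReal_integral_eq_lintegral_ofReal (hGammaInt.const_mul _)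
      ((ae_restrict_iff' measurableSet_Ioi).2 (ae_of_all _ fun t ht => by
        have h1 : (0:ℝ) ≤ Real.exp (-t) * t ^ (s/2 - 1) :=
          mul_nonneg (Real.exp_pos _).le (Real.rpow_nonneg (le_of_lt ht) _)
        have h2 : (0:ℝ) ≤ cst s * (2 * Real.sqrt Real.pi) :=
          mul_nonneg hc.le (by positivity)
        exact mul_nonneg h2 h1))]
    congr 1
    rw [MeasureTheory.integral_const_mul, ← Real.Gamma_eq_integral (half_pos hs)]
    have hne : 2 * Real.sqrt Real.pi * Real.Gamma (s/2) ≠ 0 := by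
      have h1 := Real.Gamma_pos_of_pos (half_pos hs)
      have h2 := Real.sqrt_pos.2 Real.pi_pos
      positivity
    unfold cst
    field_simp
  have hIB : ∫⁻ t in Set.Ioi (0:ℝ), ENNReal.ofReal (B t) = ENNReal.ofReal (δ * Bconst s) := by
    have hint : IntegrableOn
        (fun t : ℝ => δ * (cst s * (16 * Real.sqrt Real.pi)) *
          (t ^ ((s-1)/2) * Real.exp (-(2⁻¹ * t)))) (Set.Ioi 0) :=
      (Ccap_integrableOn hs).const_mul _
    have hBeq : ∀ t : ℝ, B t = δ * (cst s * (16 * Real.sqrt Real.pi)) *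
        (t ^ ((s-1)/2) * Real.exp (-(2⁻¹ * t))) := fun t => by rw [hB]; ring
    simp_rw [hBeq]
    rw [← ofReal_integral_eq_lintegral_ofReal hint
      ((ae_restrict_iff' measurableSet_Ioi).2 (ae_of_all _ fun t ht => by
        have h1 : (0:ℝ) ≤ t ^ ((s-1)/2) * Real.exp (-(2⁻¹ * t)) :=
          mul_nonneg (Real.rpow_nonneg (le_of_lt ht) _) (Real.exp_pos _).le
        have h2 : (0:ℝ) ≤ δ * (cst s * (16 * Real.sqrt Real.pi)) :=
          mul_nonneg hδ0 (mul_nonneg hc.le (by positivity))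
        exact mul_nonneg h2 h1))]
    congr 1
    rw [MeasureTheory.integral_const_mul]
    unfold Bconst Ccap
    ring
  calc ∫⁻ x : ℝ, ENNReal.ofReal (Real.exp (δ * |x|) * besselKernel s x)
      ≤ ∫⁻ x : ℝ, ∫⁻ t in Set.Ioi (0:ℝ),
          ENNReal.ofReal (Real.exp (δ * |x|) * cst s * G s x t) := lintegral_mono hpt
    _ = ∫⁻ t in Set.Ioi (0:ℝ), ∫⁻ x : ℝ,
          ENNReal.ofReal (Real.exp (δ * |x|) * cst s * G s x t) := hswap
    _ ≤ ∫⁻ t in Set.Ioi (0:ℝ), ENNReal.ofReal (A t + B t) := hstep3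
    _ ≤ (∫⁻ t in Set.Ioi (0:ℝ), ENNReal.ofReal (A t)) +
          ∫⁻ t in Set.Ioi (0:ℝ), ENNReal.ofReal (B t) := hsplit
    _ = ENNReal.ofReal 1 + ENNReal.ofReal (δ * Bconst s) := by rw [hIA, hIB]
    _ = ENNReal.ofReal (1 + δ * Bconst s) :=
        (ENNReal.ofReal_add zero_le_one (mul_nonneg hδ0 (Bconst_nonneg hs))).symm
lemma kernel_exp_integrable {s : ℝ} (hs : 0 < s) {δ : ℝ} (hδ0 : 0 ≤ δ) (hδ : δ ≤ 1/2) :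
    Integrable (fun x : ℝ => Real.exp (δ * |x|) * besselKernel s x) ∧
      ∫ x : ℝ, Real.exp (δ * |x|) * besselKernel s x ≤ 1 + δ * Bconst s := by
  have hmeas : Measurable fun x : ℝ => Real.exp (δ * |x|) * besselKernel s x :=
    ((measurable_id.abs.const_mul δ).exp).mul (measurable_kernel s)
  have hnn : ∀ x : ℝ, 0 ≤ Real.exp (δ * |x|) * besselKernel s x :=
    fun x => mul_nonneg (Real.exp_pos _).le (kernel_nonneg hs x)
  have hfin := weighted_le hs hδ0 hδ
  have hint : Integrable (fun x : ℝ => Real.exp (δ * |x|) * besselKernel s x) :=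
    ⟨hmeas.aestronglyMeasurable,
      (hasFiniteIntegral_iff_ofReal (ae_of_all _ hnn)).2
        (lt_of_le_of_lt hfin ENNReal.ofReal_lt_top)⟩
  refine ⟨hint, ?_⟩
  rw [integral_eq_lintegral_of_nonneg_ae (ae_of_all _ hnn) hmeas.aestronglyMeasurable]
  exact ENNReal.toReal_le_of_le_ofReal
    (by linarith [mul_nonneg hδ0 (Bconst_nonneg hs)]) hfin

lemma integrable_exp_neg_abs {b : ℝ} (hb : 0 < b) :
    Integrable fun x : ℝ => Real.exp (-(b * |x|)) := by
  have h1 : IntegrableOn (fun x : ℝ => Real.exp (-(b*|x|))) (Set.Ioi 0) := by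
    apply (exp_neg_integrableOn_Ioi 0 hb).congr_fun ?_ measurableSet_Ioi
    intro x hx
    simp only [abs_of_pos (Set.mem_Ioi.1 hx), neg_mul]
  have h1' : IntegrableOn (fun x : ℝ => Real.exp (-(b*|x|))) (Set.Ici 0) := by
    refine (integrableOn_Ici_iff_integrableOn_Ioi ?_).2 h1; simp
  have h2 : IntegrableOn (fun x : ℝ => Real.exp (-(b*|x|))) (Set.Iic 0) := by
    rw [← (Measure.measurePreserving_neg (volume : Measure ℝ)).integrableOn_comp_preimage
      (Homeomorph.neg ℝ).measurableEmbedding]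
    simp only [Function.comp_def, abs_neg, neg_preimage, neg_Iic, neg_zero]
    exact h1'
  rw [← integrableOn_univ, ← Set.Iic_union_Ioi (a := (0:ℝ))]
  exact h2.union h1
lemma min_mul_le {u v w N : ℝ} (h : u ≤ v * w) (hv : 1 ≤ v) (hN : 0 ≤ N) :
    min u N ≤ v * min w N := by
  rcases le_total w N with hw | hw
  · rw [min_eq_left hw]; exact (min_le_left u N).trans h
  · rw [min_eq_right hw]
    calc min u N ≤ N := min_le_right _ _
      _ = 1 * N := (one_mul N).symm
      _ ≤ v * N := mul_le_mul_of_nonneg_right hv hN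


end SolitaryAux

open SolitaryAux

/-- exponential decay of nontrivial bounded solitary solutions with
supercritical speed `μ > 1`: `e^{δ|·|} Φ ∈ L¹ ∩ L^∞` for some `δ > 0`. -/
theorem solitary_wave_exponential_decay (s : ℝ) (hs : 0 < s) (μ : ℝ) (hμ : 1 < μ)
    (Φ : ℝ → ℝ) (hcont : Continuous Φ) (hbdd : ∃ M : ℝ, ∀ x : ℝ, |Φ x| ≤ M)
    (hsol : ∀ x : ℝ, -μ * Φ x + Φ x ^ 2 + convBessel s Φ x = 0)
    (hnontriv : ∃ x : ℝ, Φ x ≠ 0)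
    (hlimtop : Tendsto Φ atTop (nhds 0)) (hlimbot : Tendsto Φ atBot (nhds 0)) :
    ∃ δ : ℝ, 0 < δ ∧
      Integrable (fun x : ℝ => Real.exp (δ * |x|) * Φ x) ∧
      ∃ M : ℝ, ∀ x : ℝ, |Real.exp (δ * |x|) * Φ x| ≤ M := by
  obtain ⟨M₀, hM₀⟩ := hbdd
  set M : ℝ := max M₀ 0 with hM
  have hMb : ∀ x, |Φ x| ≤ M := fun x => (hM₀ x).trans (le_max_left _ _)
  have hM0 : 0 ≤ M := le_max_right _ _
  set a : ℝ := (μ - 1) / 2 with ha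
  have ha0 : 0 < a := by rw [ha]; linarith
  set lam : ℝ := 1 + a with hlam
  have hlam0 : (0:ℝ) < lam := by rw [hlam]; linarith
  -- find R
  have h1 : ∀ᶠ x in atTop, |Φ x| ≤ a := by
    have := hlimtop.eventually (Metric.closedBall_mem_nhds (0:ℝ) ha0)
    filter_upwards [this] with x hx
    simpa [Metric.mem_closedBall, Real.dist_eq] using hx
  have h2 : ∀ᶠ x in atBot, |Φ x| ≤ a := by
    have := hlimbot.eventually (Metric.closedBall_mem_nhds (0:ℝ) ha0)
    filter_upwards [this] with x hx
    simpa [Metric.mem_closedBall, Real.dist_eq] using hx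
  obtain ⟨R₁, hR₁⟩ := eventually_atTop.1 h1
  obtain ⟨R₂, hR₂⟩ := eventually_atBot.1 h2
  set R : ℝ := max R₁ (max (-R₂) 0) with hR
  have hR0 : 0 ≤ R := le_max_of_le_right (le_max_right _ _)
  have hRsmall : ∀ x, R ≤ |x| → |Φ x| ≤ a := by
    intro x hx
    rcases le_or_gt 0 x with h | h
    · apply hR₁
      rw [abs_of_nonneg h] at hx
      exact le_trans (le_max_left _ _) hx
    · apply hR₂
      rw [abs_of_neg h] at hx
      have h3 : -R₂ ≤ -x := le_trans (le_trans (le_max_left _ _) (le_max_right R₁ _)) hx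
      linarith
  -- the key integral inequality at large |x|
  have hlam_le : ∀ x, R ≤ |x| →
      lam * |Φ x| ≤ ∫ y, besselKernel s (x - y) * |Φ y| := by
    intro x hx
    have hconv : convBessel s Φ x = Φ x * (μ - Φ x) := by linear_combination hsol x
    have habs : lam ≤ |μ - Φ x| := by
      have h1 : |Φ x| ≤ a := hRsmall x hx
      have h2 : Φ x ≤ a := le_trans (le_abs_self _) h1
      have h2' : Φ x ≤ (μ - 1) / 2 := by rw [ha] at h2; exact h2
      rw [abs_of_pos (by linarith : (0:ℝ) < μ - Φ x), hlam, ha]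
      linarith
    calc lam * |Φ x| ≤ |μ - Φ x| * |Φ x| := mul_le_mul_of_nonneg_right habs (abs_nonneg _)
      _ = |convBessel s Φ x| := by rw [hconv, abs_mul]; ring
      _ ≤ ∫ y, |besselKernel s (x - y) * Φ y| := by
          unfold convBessel
          have h := norm_integral_le_integral_norm (μ := (volume : Measure ℝ))
            (f := fun y => besselKernel s (x - y) * Φ y)
          simpa only [Real.norm_eq_abs] using h
      _ = ∫ y, besselKernel s (x - y) * |Φ y| := by
          apply integral_congr_ae
          refine ae_of_all _ fun y => ?_
          simp only [abs_mul, abs_of_nonneg (kernel_nonneg hs (x - y))]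
  -- choose δ
  set δl : ℝ := min (1/2) (a / (2 * (Bconst s + 1))) with hδl
  have hBn : 0 ≤ Bconst s := Bconst_nonneg hs
  have hδl0 : 0 < δl := by
    apply lt_min (by norm_num)
    positivity
  have hδl12 : δl ≤ 1/2 := min_le_left _ _
  obtain ⟨hF, hFle⟩ := kernel_exp_integrable hs hδl0.le hδl12
  set F : ℝ → ℝ := fun y => Real.exp (δl * |y|) * besselKernel s y with hFdef
  have hFle2 : ∫ y, F y ≤ 1 + a / 2 := by
    have hd : δl * Bconst s ≤ a / 2 := by
      have h1 : δl ≤ a / (2 * (Bconst s + 1)) := min_le_right _ _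
      have h2 : δl * Bconst s ≤ (a / (2 * (Bconst s + 1))) * Bconst s :=
        mul_le_mul_of_nonneg_right h1 hBn
      have h3 : (a / (2 * (Bconst s + 1))) * Bconst s ≤ a / 2 := by
        rw [div_mul_eq_mul_div, div_le_div_iff₀ (by positivity) (by norm_num)]
        nlinarith
      linarith
    calc ∫ y, F y ≤ 1 + δl * Bconst s := hFle
      _ ≤ 1 + a / 2 := by linarith
  have hFnn : ∀ y, 0 ≤ F y := fun y => mul_nonneg (Real.exp_pos _).le (kernel_nonneg hs y)
  have hFmeas : Measurable F := ((measurable_id.abs.const_mul δl).exp).mul (measurable_kernel s)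
  have hK : Integrable (besselKernel s) := by
    have h := (kernel_exp_integrable hs (le_refl (0:ℝ)) (by norm_num)).1
    simpa using h
  set C1 : ℝ := Real.exp (δl * R) * M with hC1
  have hC10 : 0 ≤ C1 := mul_nonneg (Real.exp_pos _).le hM0
  set q : ℝ := (1 + a / 2) / lam with hq
  have hq1 : q < 1 := by
    rw [hq, div_lt_one hlam0, hlam]
    linarith
  -- main bootstrap
  have bound_main : ∀ N : ℝ, 1 ≤ N → ∀ x : ℝ, min (Real.exp (δl * |x|)) N * |Φ x| ≤ C1 := by
    intro N hN
    set f : ℝ → ℝ := fun x => min (Real.exp (δl * |x|)) N * |Φ x| with hf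
    have hf_nonneg : ∀ x, 0 ≤ f x :=
      fun x => mul_nonneg (le_min (Real.exp_pos _).le (by linarith)) (abs_nonneg _)
    have hfb : ∀ x, f x ≤ N * M :=
      fun x => mul_le_mul (min_le_right _ _) (hMb x) (abs_nonneg _) (by linarith)
    have hbdd2 : BddAbove (Set.range f) := ⟨N * M, by rintro _ ⟨x, rfl⟩; exact hfb x⟩
    set T : ℝ := ⨆ x, f x with hT
    have hfT : ∀ x, f x ≤ T := fun x => le_ciSup hbdd2 x
    have hT0 : 0 ≤ T := le_trans (hf_nonneg 0) (hfT 0)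
    have hcont_f : Continuous f :=
      ((Real.continuous_exp.comp (continuous_const.mul continuous_abs)).min
        continuous_const).mul hcont.abs
    have step : ∀ x, f x ≤ max C1 (q * T) := by
      intro x
      rcases le_or_gt (|x|) R with hx | hx
      · refine le_max_of_le_left ?_
        calc f x ≤ Real.exp (δl * |x|) * |Φ x| :=
              mul_le_mul_of_nonneg_right (min_le_left _ _) (abs_nonneg _)
          _ ≤ Real.exp (δl * R) * M :=
              mul_le_mul (Real.exp_le_exp.2 (mul_le_mul_of_nonneg_left hx hδl0.le)) (hMb x)
                (abs_nonneg _) (Real.exp_pos _).le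
      · refine le_max_of_le_right ?_
        have hlx := hlam_le x hx.le
        have hminnn : 0 ≤ min (Real.exp (δl * |x|)) N := le_min (Real.exp_pos _).le (by linarith)
        have hFc : Integrable (fun y => F (x - y)) := hF.comp_sub_left x
        have hI3 : Integrable (fun y => F (x - y) * T) := hFc.mul_const T
        have hmeasKXY : AEStronglyMeasurable (fun y => besselKernel s (x - y) * |Φ y|) volume :=
          (((measurable_kernel s).comp (measurable_const.sub measurable_id)).mul
            hcont.abs.measurable).aestronglyMeasurable
        have hI1 : Integrable (fun y => besselKernel s (x - y) * |Φ y|) := by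
          apply Integrable.mono' ((hK.comp_sub_left x).const_mul M) hmeasKXY
          refine ae_of_all _ fun y => ?_
          rw [Real.norm_eq_abs, abs_of_nonneg (mul_nonneg (kernel_nonneg hs _) (abs_nonneg _))]
          calc besselKernel s (x - y) * |Φ y| ≤ besselKernel s (x - y) * M :=
                mul_le_mul_of_nonneg_left (hMb y) (kernel_nonneg hs _)
            _ = M * besselKernel s (x - y) := mul_comm _ _
        have hI1' : Integrable
            (fun y => min (Real.exp (δl * |x|)) N * (besselKernel s (x - y) * |Φ y|)) :=
          hI1.const_mul _
        have hI2 : Integrable (fun y => F (x - y) * f y) := by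
          apply Integrable.mono' (hFc.const_mul (N * M))
          · exact ((hFmeas.comp (measurable_const.sub measurable_id)).mul
              hcont_f.measurable).aestronglyMeasurable
          · refine ae_of_all _ fun y => ?_
            have hFnn' : 0 ≤ F (x - y) := hFnn (x - y)
            rw [Real.norm_eq_abs, abs_of_nonneg (mul_nonneg hFnn' (hf_nonneg y))]
            calc F (x - y) * f y ≤ F (x - y) * (N * M) :=
                  mul_le_mul_of_nonneg_left (hfb y) hFnn'
              _ = (N * M) * F (x - y) := mul_comm _ _
        have hptwise : ∀ y, min (Real.exp (δl * |x|)) N * (besselKernel s (x - y) * |Φ y|) ≤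
            F (x - y) * f y := by
          intro y
          have htri : Real.exp (δl * |x|) ≤ Real.exp (δl * |x - y|) * Real.exp (δl * |y|) := by
            rw [← Real.exp_add]
            apply Real.exp_le_exp.2
            have h := abs_add_le (x - y) y
            rw [sub_add_cancel] at h
            calc δl * |x| ≤ δl * (|x - y| + |y|) := mul_le_mul_of_nonneg_left h hδl0.le
              _ = δl * |x - y| + δl * |y| := mul_add _ _ _
          have hmin := min_mul_le (N := N) htri
            (Real.one_le_exp (mul_nonneg hδl0.le (abs_nonneg _))) (by linarith)
          have h2 := mul_le_mul_of_nonneg_right hmin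
            (mul_nonneg (kernel_nonneg hs (x - y)) (abs_nonneg (Φ y)))
          calc min (Real.exp (δl * |x|)) N * (besselKernel s (x - y) * |Φ y|)
              ≤ (Real.exp (δl * |x - y|) * min (Real.exp (δl * |y|)) N) *
                  (besselKernel s (x - y) * |Φ y|) := h2
            _ = F (x - y) * f y := by simp only [hFdef, hf]; ring
        calc f x = min (Real.exp (δl * |x|)) N * |Φ x| := rfl
          _ ≤ min (Real.exp (δl * |x|)) N *
              ((1 / lam) * ∫ y, besselKernel s (x - y) * |Φ y|) := by
              apply mul_le_mul_of_nonneg_left ?_ hminnn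
              rw [show |Φ x| = (1 / lam) * (lam * |Φ x|) by field_simp]
              exact mul_le_mul_of_nonneg_left hlx (by positivity)
          _ = (1 / lam) * ∫ y, min (Real.exp (δl * |x|)) N *
                (besselKernel s (x - y) * |Φ y|) := by
              rw [MeasureTheory.integral_const_mul]; ring
          _ ≤ (1 / lam) * ∫ y, F (x - y) * f y :=
              mul_le_mul_of_nonneg_left (integral_mono hI1' hI2 hptwise) (by positivity)
          _ ≤ (1 / lam) * ∫ y, F (x - y) * T :=
              mul_le_mul_of_nonneg_left
                (integral_mono hI2 hI3 fun y => mul_le_mul_of_nonneg_left (hfT y) (hFnn (x - y)))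
                (by positivity)
          _ = (1 / lam) * ((∫ y, F (x - y)) * T) := by rw [MeasureTheory.integral_mul_const]
          _ = (1 / lam) * ((∫ y, F y) * T) := by rw [integral_sub_left_eq_self F volume x]
          _ ≤ (1 / lam) * ((1 + a / 2) * T) :=
              mul_le_mul_of_nonneg_left (mul_le_mul_of_nonneg_right hFle2 hT0) (by positivity)
          _ = q * T := by rw [hq]; ring
    have hTmax : T ≤ max C1 (q * T) := ciSup_le step
    have hTC : T ≤ C1 := by
      rcases le_max_iff.1 hTmax with h | h
      · exact h
      · nlinarith
    intro x
    exact (hfT x).trans hTC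
  have key : ∀ x : ℝ, Real.exp (δl * |x|) * |Φ x| ≤ C1 := by
    intro x
    have h := bound_main (max (Real.exp (δl * |x|)) 1) (le_max_right _ _) x
    rwa [min_eq_left (le_max_left _ _)] at h
  refine ⟨δl / 2, by positivity, ?_, ⟨C1, ?_⟩⟩
  · apply Integrable.mono' ((integrable_exp_neg_abs (b := δl / 2) (by positivity)).const_mul C1)
    · exact ((Real.continuous_exp.comp (continuous_const.mul continuous_abs)).mul
        hcont).aestronglyMeasurable
    · refine ae_of_all _ fun x => ?_
      rw [Real.norm_eq_abs, abs_mul, abs_of_pos (Real.exp_pos _)]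
      have hkey := key x
      have heq : Real.exp (δl / 2 * |x|) =
          Real.exp (-(δl / 2 * |x|)) * Real.exp (δl * |x|) := by
        rw [← Real.exp_add]; ring_nf
      calc Real.exp (δl / 2 * |x|) * |Φ x|
          = Real.exp (-(δl / 2 * |x|)) * (Real.exp (δl * |x|) * |Φ x|) := by rw [heq]; ring
        _ ≤ Real.exp (-(δl / 2 * |x|)) * C1 :=
            mul_le_mul_of_nonneg_left hkey (Real.exp_pos _).le
        _ = C1 * Real.exp (-(δl / 2 * |x|)) := mul_comm _ _
  · intro x
    rw [abs_mul, abs_of_pos (Real.exp_pos _)]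
    calc Real.exp (δl / 2 * |x|) * |Φ x| ≤ Real.exp (δl * |x|) * |Φ x| := by
          apply mul_le_mul_of_nonneg_right ?_ (abs_nonneg _)
          apply Real.exp_le_exp.2
          nlinarith [abs_nonneg x]
      _ ≤ C1 := key x
end
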